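/- arXiv:1102.3359 — 9 statements merged into one kernel-verified Lean document; each statement's English description precedes it below -/
import Mathlib

section
/- A permutation π is connected (i.e., it is not the direct sum of two nonempty permutations) if and only if the labelled Motzkin path associated to the involution π is irreducible (touches the x-axis only at the origin and the final point), where this applies to involutions π with their standard associated Motzkin path. -/
open Equiv Finset

def Avoids4321 {n : ℕ} (π : Equiv.Perm (Fin n)) : Prop :=
  ¬ ∃ a b c d : Fin n, a < b ∧ b < c ∧ c < d ∧ π d < π c ∧ π c < π b ∧ π b < π a

def Avoids321 {n : ℕ} (π : Equiv.Perm (Fin n)) : Prop :=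
  ¬ ∃ a b c : Fin n, a < b ∧ b < c ∧ π c < π b ∧ π b < π a

def Avoids132 {n : ℕ} (π : Equiv.Perm (Fin n)) : Prop :=
  ¬ ∃ a b c : Fin n, a < b ∧ b < c ∧ π a < π c ∧ π c < π b

def Avoids312 {n : ℕ} (π : Equiv.Perm (Fin n)) : Prop :=
  ¬ ∃ a b c : Fin n, a < b ∧ b < c ∧ π b < π c ∧ π c < π a

def Avoids3412 {n : ℕ} (π : Equiv.Perm (Fin n)) : Prop :=
  ¬ ∃ a b c d : Fin n, a < b ∧ b < c ∧ c < d ∧ π c < π d ∧ π d < π a ∧ π a < π b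

/-- The image of the index interval `[a,b]` under `π` is a contiguous set of values. -/
def IsIntervalImage {n : ℕ} (π : Equiv.Perm (Fin n)) (a b : Fin n) : Prop :=
  ∀ i j k : Fin n, a ≤ i → i ≤ b → a ≤ j → j ≤ b → π i ≤ k → k ≤ π j →
    ∃ m : Fin n, a ≤ m ∧ m ≤ b ∧ π m = k

/-- A permutation is simple if its only intervals are the singletons and the whole interval. -/
def IsSimplePerm {n : ℕ} (π : Equiv.Perm (Fin n)) : Prop :=
  ∀ a b : Fin n, a < b → IsIntervalImage π a b → a.val = 0 ∧ b.val = n - 1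

/-- A permutation is connected (sum-indecomposable). -/
def IsConnectedPerm {n : ℕ} (π : Equiv.Perm (Fin n)) : Prop :=
  ¬ ∃ k : ℕ, 0 < k ∧ k < n ∧ ∀ i : Fin n, i.val < k → (π i).val < k

/-- The step of the Motzkin path associated to an involution at position `i`:
horizontal (0) at a fixed point, up (1) at an excedance, down (-1) at a deficiency. -/
def invStep {n : ℕ} (π : Equiv.Perm (Fin n)) (i : Fin n) : ℤ :=
  if π i = i then 0 else if i < π i then 1 else -1

/-- The height of the associated Motzkin path after the first `k` steps. -/
def heightUpTo {n : ℕ} (π : Equiv.Perm (Fin n)) (k : ℕ) : ℤ :=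
  ∑ i ∈ Finset.univ.filter (fun i : Fin n => i.val < k), invStep π i

/-- A Motzkin path, as its list of steps. -/
def IsMotzkinPath (l : List ℤ) : Prop :=
  (∀ s ∈ l, s = 1 ∨ s = 0 ∨ s = -1) ∧ l.sum = 0 ∧ ∀ p : List ℤ, p <+: l → 0 ≤ p.sum

lemma heightUpTo_eq_card {n : ℕ} (π : Equiv.Perm (Fin n))
    (hinv : Function.Involutive ⇑π) (k : ℕ) :
    heightUpTo π k =
      ((Finset.univ.filter fun i : Fin n => i.val < k ∧ k ≤ (π i).val).card : ℤ) := by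
  unfold heightUpTo
  rw [Finset.sum_filter]
  have h1 : ∀ i : Fin n, (if i.val < k then invStep π i else 0)
      = (if i.val < k ∧ i < π i then (1:ℤ) else 0)
        - (if i.val < k ∧ π i < i then (1:ℤ) else 0) := by
    intro i
    unfold invStep
    by_cases hk : i.val < k
    · rcases lt_trichotomy i (π i) with h2 | h2 | h2
      · simp [hk, h2, h2.ne', not_lt.mpr h2.le]
      · simp [hk, h2.symm]
      · simp [hk, h2.ne, h2, not_lt.mpr h2.le]
    · simp [hk]
  simp_rw [h1]
  rw [Finset.sum_sub_distrib]
  have h2 : ∑ i : Fin n, (if i.val < k ∧ π i < i then (1:ℤ) else 0)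
      = ∑ i : Fin n, (if (π i).val < k ∧ i < π i then (1:ℤ) else 0) := by
    rw [← Equiv.sum_comp π (fun i : Fin n => if i.val < k ∧ π i < i then (1:ℤ) else 0)]
    apply Finset.sum_congr rfl
    intro i _
    simp [hinv i]
  rw [h2, ← Finset.sum_sub_distrib]
  have h3 : ∀ i : Fin n,
      ((if i.val < k ∧ i < π i then (1:ℤ) else 0)
        - if (π i).val < k ∧ i < π i then (1:ℤ) else 0)
      = if i.val < k ∧ k ≤ (π i).val then (1:ℤ) else 0 := by
    intro i
    rcases lt_trichotomy i (π i) with h3 | h3 | h3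
    · have hv := (Fin.lt_def).mp h3
      by_cases hk : (π i).val < k
      · simp [h3, hk, Nat.lt_trans hv hk, not_le.mpr hk]
      · by_cases hik : i.val < k
        · simp [h3, hk, hik, not_lt.mp hk]
        · simp [hik, hk]
    · simp only [← h3, lt_self_iff_false, and_false, if_false, sub_zero]
      split <;> [skip; rfl]
      omega
    · have hv := (Fin.lt_def).mp h3
      simp only [not_lt.mpr h3.le, and_false, if_false, sub_zero]
      split <;> [skip; rfl]
      omega
  simp_rw [h3]
  rw [Finset.sum_boole]

/-- An involution is connected iff its associated Motzkin path is irreducible,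
i.e. returns to height 0 only at the final point. -/
theorem stmt0 (n : ℕ) (π : Equiv.Perm (Fin n)) (hinv : Function.Involutive ⇑π) :
    IsConnectedPerm π ↔ ∀ k : ℕ, 0 < k → k < n → 0 < heightUpTo π k := by
  constructor
  · intro hc k hk0 hkn
    rw [heightUpTo_eq_card π hinv]
    have hex : ∃ i : Fin n, i.val < k ∧ k ≤ (π i).val := by
      by_contra h
      push_neg at h
      exact hc ⟨k, hk0, hkn, fun i hi => h i hi⟩
    obtain ⟨i, hi⟩ := hex
    have : 0 < (Finset.univ.filter fun i : Fin n => i.val < k ∧ k ≤ (π i).val).card :=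
      Finset.card_pos.mpr ⟨i, Finset.mem_filter.mpr ⟨Finset.mem_univ i, hi⟩⟩
    exact_mod_cast this
  · rintro h ⟨k, hk0, hkn, hall⟩
    have hpos := h k hk0 hkn
    rw [heightUpTo_eq_card π hinv] at hpos
    have : 0 < (Finset.univ.filter fun i : Fin n => i.val < k ∧ k ≤ (π i).val).card := by
      exact_mod_cast hpos
    obtain ⟨i, hi⟩ := Finset.card_pos.mp this
    obtain ⟨-, hi1, hi2⟩ := Finset.mem_filter.mp hi
    exact absurd (hall i hi1) (by omega)
end

section
/- Let π be an involution avoiding 4321 that is an inflation of 21 (i.e., skew-decomposable). Then either π = 21[α₁, α₂] with α₁ and α₂ both increasing permutations, or π = 321[α₁, α₂, α₃] with α₁, α₂, α₃ all increasing permutations and α₁, α₃ of equal length. -/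
open Equiv Finset

/-- A skew-decomposable 4321-avoiding involution is either `21[1..a, 1..a]` or
`321[1..a, 1..m, 1..a]` with increasing blocks. -/
theorem stmt3 (n : ℕ) (π : Equiv.Perm (Fin n)) (hinv : Function.Involutive ⇑π)
    (hav : Avoids4321 π)
    (hskew : ∃ a : ℕ, 0 < a ∧ a < n ∧ ∀ i : Fin n, i.val < a → n - a ≤ (π i).val) :
    (∃ a : ℕ, 0 < a ∧ n = 2 * a ∧ ∀ i : Fin n,
        (π i).val = if i.val < a then i.val + a else i.val - a) ∨
    (∃ a m : ℕ, 0 < a ∧ 0 < m ∧ n = 2 * a + m ∧ ∀ i : Fin n,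
        (π i).val = if i.val < a then i.val + a + m
          else if i.val < a + m then i.val else i.val - (a + m)) := by
  obtain ⟨a, ha0, han, ha⟩ := hskew
  have hba : min a (n - a) ≤ a := min_le_left _ _
  have hbna : min a (n - a) ≤ n - a := min_le_right _ _
  set b := min a (n - a) with hbdef
  have hb0 : 0 < b := lt_min ha0 (by omega)
  have hbn : b ≤ n - b := by omega
  -- bottom block maps into top block
  have h1 : ∀ i : Fin n, i.val < b → n - b ≤ (π i).val := by
    intro i hi
    rcases le_or_gt a (n - a) with h | h
    · have hb : b = a := min_eq_left h
      have := ha i (by omega)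
      omega
    · have hb : b = n - a := min_eq_right h.le
      have h2 := ha i (by omega)
      by_contra hlt
      push_neg at hlt
      have h4 : (π i).val < a := by omega
      have h3 := ha (π i) h4
      rw [hinv i] at h3
      omega
  -- strict monotonicity on the bottom block
  have hmono : ∀ i j : Fin n, i.val < b → j.val < b → i.val < j.val →
      (π i).val < (π j).val := by
    intro i j hi hj hij
    by_contra hc
    push_neg at hc
    have hne : (π j).val ≠ (π i).val := by
      intro h
      exact absurd (congrArg Fin.val (π.injective (Fin.ext h))) (by omega)
    have hlt : (π j).val < (π i).val := lt_of_le_of_ne hc hne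
    refine hav ⟨i, j, π j, π i, ?_, ?_, ?_, ?_, ?_, ?_⟩
    · rw [Fin.lt_def]; omega
    · rw [Fin.lt_def]; have := h1 j hj; omega
    · rw [Fin.lt_def]; omega
    · rw [hinv i, hinv j, Fin.lt_def]; omega
    · rw [hinv j, Fin.lt_def]; have := h1 j hj; omega
    · rw [Fin.lt_def]; omega
  -- additive growth from strict monotonicity
  have L : ∀ k : ℕ, ∀ i j : Fin n, i.val < b → j.val < b → j.val = i.val + k →
      (π i).val + k ≤ (π j).val := by
    intro k
    induction k with
    | zero =>
      intro i j hi hj hjk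
      have : j = i := Fin.ext (by omega)
      subst this
      omega
    | succ k ih =>
      intro i j hi hj hjk
      have hj' : i.val + k < n := by omega
      have hj'' := ih i ⟨i.val + k, hj'⟩ hi (by simp; omega) (by simp)
      have hst := hmono ⟨i.val + k, hj'⟩ j (by simp; omega) hj (by simp; omega)
      omega
  have hlow : ∀ i : Fin n, i.val < b → i.val + (n - b) ≤ (π i).val := by
    intro i hi
    have hn0 : 0 < n := by omega
    have hL := L i.val ⟨0, hn0⟩ i (by simp; omega) hi (by simp)
    have := h1 ⟨0, hn0⟩ (by simp; omega)
    omega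
  have hupp : ∀ i : Fin n, i.val < b → (π i).val ≤ i.val + (n - b) := by
    intro i hi
    have hb1 : b - 1 < n := by omega
    have hL := L (b - 1 - i.val) i ⟨b - 1, hb1⟩ hi (by simp; omega) (by simp; omega)
    have h2 : (π (⟨b - 1, hb1⟩ : Fin n)).val < n := (π _).isLt
    omega
  have hB : ∀ i : Fin n, i.val < b → (π i).val = i.val + (n - b) := by
    intro i hi
    have := hlow i hi; have := hupp i hi; omega
  have hT : ∀ i : Fin n, n - b ≤ i.val → (π i).val = i.val - (n - b) := by
    intro i hi
    have hilt := i.isLt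
    have hk : i.val - (n - b) < n := by omega
    have hkb : (⟨i.val - (n - b), hk⟩ : Fin n).val < b := by simp; omega
    have hj := hB ⟨i.val - (n - b), hk⟩ hkb
    have hji : π ⟨i.val - (n - b), hk⟩ = i := Fin.ext (by simp at hj ⊢; omega)
    have h2 := hinv ⟨i.val - (n - b), hk⟩
    rw [hji] at h2
    rw [h2]
  have hM : ∀ i : Fin n, b ≤ i.val → i.val < n - b → (π i).val = i.val := by
    intro i hi1 hi2
    have hm1 : ¬ (π i).val < b := by
      intro h
      have h2 := hB (π i) h
      rw [hinv i] at h2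
      omega
    have hm2 : ¬ (n - b ≤ (π i).val) := by
      intro h
      have h2 := hT (π i) h
      rw [hinv i] at h2
      have := (π i).isLt
      omega
    push_neg at hm1 hm2
    by_contra hne
    have hn0 : 0 < n := by omega
    have hnb : n - b < n := by omega
    have hp : (π (⟨0, hn0⟩ : Fin n)).val = n - b := by
      have := hB ⟨0, hn0⟩ (by simp; omega); simpa using this
    have hq : (π (⟨n - b, hnb⟩ : Fin n)).val = 0 := by
      have := hT ⟨n - b, hnb⟩ (by simp); simp at this; omega
    have hpi := hinv i
    rcases lt_or_gt_of_ne hne with h | h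
    · -- (π i).val < i.val
      refine hav ⟨⟨0, hn0⟩, π i, i, ⟨n - b, hnb⟩, ?_, ?_, ?_, ?_, ?_, ?_⟩
      · rw [Fin.lt_def]; simp; omega
      · rw [Fin.lt_def]; omega
      · rw [Fin.lt_def]; simp; omega
      · rw [Fin.lt_def, hq]; omega
      · rw [hpi, Fin.lt_def]; omega
      · rw [hpi, Fin.lt_def, hp]; omega
    · -- i.val < (π i).val
      refine hav ⟨⟨0, hn0⟩, i, π i, ⟨n - b, hnb⟩, ?_, ?_, ?_, ?_, ?_, ?_⟩
      · rw [Fin.lt_def]; simp; omega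
      · rw [Fin.lt_def]; omega
      · rw [Fin.lt_def]; simp; omega
      · rw [hpi, Fin.lt_def, hq]; omega
      · rw [hpi, Fin.lt_def]; omega
      · rw [Fin.lt_def, hp]; omega
  rcases eq_or_lt_of_le hbn with heq | hlt
  · left
    refine ⟨b, hb0, by omega, ?_⟩
    intro i
    by_cases hi : i.val < b
    · rw [if_pos hi]; have := hB i hi; omega
    · rw [if_neg hi]
      have h2 : n - b ≤ i.val := by omega
      have := hT i h2; omega
  · right
    refine ⟨b, n - 2 * b, hb0, by omega, by omega, ?_⟩
    intro i
    by_cases h1' : i.val < b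
    · rw [if_pos h1']; have := hB i h1'; omega
    · rw [if_neg h1']
      by_cases h2' : i.val < b + (n - 2 * b)
      · rw [if_pos h2']
        exact hM i (by omega) (by omega)
      · rw [if_neg h2']
        have := hT i (by omega); omega
end

section
/- The reverse-complement operation is a bijection on the set of 4321-avoiding involutions of length n, and it maps simple involutions to simple involutions; moreover, on associated Motzkin paths (with unitary labelling), reverse-complement corresponds to reflecting the Motzkin path about the vertical line x = n/2. -/
open Equiv Finset

/-- The reverse-complement `ρ i = (π i.rev).rev` maps 4321-avoiding involutions to
4321-avoiding involutions, is self-inverse on this set (hence a bijection), maps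
simple involutions to simple involutions, and reflects the associated Motzkin path
about the vertical line `x = n/2` (swapping up and down steps). -/
theorem stmt7 (n : ℕ) (π : Equiv.Perm (Fin n)) (hinv : Function.Involutive ⇑π)
    (hav : Avoids4321 π) (ρ : Equiv.Perm (Fin n))
    (hρ : ∀ i : Fin n, ρ i = (π i.rev).rev) :
    Function.Involutive ⇑ρ ∧ Avoids4321 ρ ∧
    (∀ i : Fin n, (ρ i.rev).rev = π i) ∧
    (IsSimplePerm π → IsSimplePerm ρ) ∧
    (∀ i : Fin n, invStep ρ i = - invStep π i.rev) := by
  refine ⟨?_, ?_, ?_, ?_, ?_⟩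
  · intro i
    simp only [hρ, Fin.rev_rev, hinv (i.rev)]
  · rintro ⟨a, b, c, d, hab, hbc, hcd, h1, h2, h3⟩
    simp only [hρ, Fin.rev_lt_rev] at h1 h2 h3
    exact hav ⟨d.rev, c.rev, b.rev, a.rev, Fin.rev_lt_rev.mpr hcd,
      Fin.rev_lt_rev.mpr hbc, Fin.rev_lt_rev.mpr hab, h3, h2, h1⟩
  · intro i
    simp [hρ, Fin.rev_rev]
  · intro hsimp a b hab hII
    have key : IsIntervalImage π b.rev a.rev := by
      intro i j k hbi hia hbj hja hik hkj
      obtain ⟨m, ham, hmb, hm⟩ := hII j.rev i.rev k.rev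
        (by rwa [← Fin.rev_le_rev, Fin.rev_rev] at hja)
        (by rwa [← Fin.rev_le_rev, Fin.rev_rev] at hbj)
        (by rwa [← Fin.rev_le_rev, Fin.rev_rev] at hia)
        (by rwa [← Fin.rev_le_rev, Fin.rev_rev] at hbi)
        (by rw [hρ]; simp only [Fin.rev_rev]; exact Fin.rev_le_rev.mpr hkj)
        (by rw [hρ]; simp only [Fin.rev_rev]; exact Fin.rev_le_rev.mpr hik)
      refine ⟨m.rev, ?_, ?_, ?_⟩
      · exact Fin.rev_le_rev.mpr hmb
      · exact Fin.rev_le_rev.mpr ham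
      · rw [hρ] at hm
        have := congrArg Fin.rev hm
        rwa [Fin.rev_rev, Fin.rev_rev] at this
    obtain ⟨h0, h1⟩ := hsimp b.rev a.rev (Fin.rev_lt_rev.mpr hab) key
    have ha := a.isLt
    have hb := b.isLt
    simp only [Fin.val_rev] at h0 h1
    omega
  · intro i
    have h1 : ρ i = i ↔ π i.rev = i.rev := by
      rw [hρ]
      constructor
      · intro h
        have := congrArg Fin.rev h
        rwa [Fin.rev_rev] at this
      · intro h; rw [h, Fin.rev_rev]
    have h2 : i < ρ i ↔ π i.rev < i.rev := by
      rw [hρ, ← Fin.rev_rev i, Fin.rev_lt_rev, Fin.rev_rev]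
    have h3 : ρ i < i ↔ i.rev < π i.rev := by
      rw [hρ, ← Fin.rev_rev i, Fin.rev_lt_rev, Fin.rev_rev]
    unfold invStep
    rcases lt_trichotomy (π i.rev) i.rev with h | h | h
    · rw [if_neg (fun he => absurd (h1.mp he) (ne_of_lt h)),
        if_pos (h2.mpr h), if_neg (ne_of_lt h),
        if_neg (not_lt_of_gt h)]
      rfl
    · rw [if_pos (h1.mpr h), if_pos h]
      rfl
    · rw [if_neg (fun he => absurd (h1.mp he) (ne_of_gt h)),
        if_neg (fun hlt => absurd (h2.mp hlt) (not_lt_of_gt h)),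
        if_neg (ne_of_gt h), if_pos h]
end

section
/- The generating function of involutions avoiding 4321 that are inflations of 21 is β(x) = x²/((1−x²)(1−x)); equivalently, the number of skew-decomposable involutions of length n avoiding 4321 equals the number of pairs (k,m) with 2k+m = n, k ≥ 1, m ≥ 0, i.e., ⌊n/2⌋ for n ≥ 2 (counting solutions appropriately). -/
open Equiv Finset

/-- The number of skew-decomposable (inflation of 21) 4321-avoiding involutions of
length `n`. -/
noncomputable def skewCount (n : ℕ) : ℕ :=
  Nat.card {π : Equiv.Perm (Fin n) // Function.Involutive ⇑π ∧ Avoids4321 π ∧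
    ∃ a : ℕ, 0 < a ∧ a < n ∧ ∀ i : Fin n, i.val < a → n - a ≤ (π i).val}

lemma card_lt_filter (n a : ℕ) (ha : a < n) :
    (Finset.univ.filter (fun i : Fin n => i.val < a)).card = a := by
  have : (Finset.univ.filter (fun i : Fin n => i.val < a)) = Finset.Iio (⟨a, ha⟩ : Fin n) := by
    ext i; simp [Fin.lt_def]
  rw [this, Fin.card_Iio]

lemma card_ge_filter (n a : ℕ) (ha : a < n) :
    (Finset.univ.filter (fun i : Fin n => a ≤ i.val)).card = n - a := by
  have : (Finset.univ.filter (fun i : Fin n => a ≤ i.val)) = Finset.Ici (⟨a, ha⟩ : Fin n) := by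
    ext i; simp [Fin.le_def]
  rw [this, Fin.card_Ici]


lemma classify_aux {n : ℕ} (π : Equiv.Perm (Fin n)) (hinv : Function.Involutive ⇑π)
    (hav : Avoids4321 π) (a : ℕ) (ha0 : 0 < a) (h2a : 2 * a ≤ n)
    (hw : ∀ i : Fin n, i.val < a → n - a ≤ (π i).val) :
    (∀ i : Fin n, i.val < a → (π i).val = i.val + (n - a)) ∧
    (∀ i : Fin n, a ≤ i.val → i.val < n - a → π i = i) ∧
    (∀ i : Fin n, n - a ≤ i.val → (π i).val = i.val - (n - a)) := by
  have han : a < n := by omega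
  have hna : n - a < n := by omega
  -- π maps B into A
  have hBA : ∀ j : Fin n, n - a ≤ j.val → (π j).val < a := by
    have hsub : (Finset.univ.filter (fun i : Fin n => i.val < a)).image ⇑π ⊆
        Finset.univ.filter (fun i : Fin n => n - a ≤ i.val) := by
      intro j hj
      simp only [Finset.mem_image, Finset.mem_filter, Finset.mem_univ, true_and] at hj ⊢
      obtain ⟨i, hi, rfl⟩ := hj
      exact hw i hi
    have hcard : ((Finset.univ.filter (fun i : Fin n => i.val < a)).image ⇑π).card =
        n - (n - a) := by
      rw [Finset.card_image_of_injective _ π.injective, card_lt_filter n a han]; omega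
    have heq : (Finset.univ.filter (fun i : Fin n => i.val < a)).image ⇑π =
        Finset.univ.filter (fun i : Fin n => n - a ≤ i.val) := by
      apply Finset.eq_of_subset_of_card_le hsub
      rw [hcard, card_ge_filter n (n - a) hna]
    intro j hj
    have : j ∈ (Finset.univ.filter (fun i : Fin n => i.val < a)).image ⇑π := by
      rw [heq]; simp only [Finset.mem_filter, Finset.mem_univ, true_and]; exact hj
    simp only [Finset.mem_image, Finset.mem_filter, Finset.mem_univ, true_and] at this
    obtain ⟨i, hi, rfl⟩ := this
    rw [hinv i]; exact hi
  -- strict monotonicity on A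
  have L1 : ∀ i j : Fin n, i < j → j.val < a → (π i).val < (π j).val := by
    intro i j hij hj
    by_contra hc
    push_neg at hc
    have hne : π j ≠ π i := fun h => absurd (π.injective h) (by intro h'; subst h'; exact lt_irrefl _ hij)
    have hlt : π j < π i := lt_of_le_of_ne (Fin.le_def.mpr hc) hne
    refine hav ⟨i, j, π j, π i, hij, ?_, hlt, ?_, ?_, ?_⟩
    · exact Fin.lt_def.mpr (by have := hw j hj; omega)
    · rw [hinv i, hinv j]; exact hij
    · rw [hinv j]; exact Fin.lt_def.mpr (by have := hw j hj; omega)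
    · exact hlt
  -- strict monotonicity on B
  have L2 : ∀ i j : Fin n, i < j → n - a ≤ i.val → (π i).val < (π j).val := by
    intro i j hij hi
    by_contra hc
    push_neg at hc
    have hne : π j ≠ π i := fun h => absurd (π.injective h) (by intro h'; subst h'; exact lt_irrefl _ hij)
    have hlt : π j < π i := lt_of_le_of_ne (Fin.le_def.mpr hc) hne
    have := L1 (π j) (π i) hlt (hBA i hi)
    rw [hinv i, hinv j] at this
    exact absurd (Fin.lt_def.mpr this) (lt_asymm hij)
  -- lower bound on A
  have IA : ∀ m : ℕ, ∀ i : Fin n, i.val < a → i.val = m → n - a + i.val ≤ (π i).val := by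
    intro m
    induction m with
    | zero => intro i hi him; have := hw i hi; omega
    | succ p ih =>
      intro i hi him
      have hp : p < n := by omega
      have h1 := ih ⟨p, hp⟩ (by simp; omega) rfl
      have h2 := L1 ⟨p, hp⟩ i (Fin.lt_def.mpr (by simp; omega)) hi
      simp at h1
      omega
  -- lower bound on B
  have IB : ∀ m : ℕ, ∀ i : Fin n, n - a ≤ i.val → i.val = n - a + m → m ≤ (π i).val := by
    intro m
    induction m with
    | zero => intro i hi him; omega
    | succ p ih =>
      intro i hi him
      have hp : n - a + p < n := by omega
      have h1 := ih ⟨n - a + p, hp⟩ (by simp) rfl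
      have h2 := L2 ⟨n - a + p, hp⟩ i (Fin.lt_def.mpr (by simp; omega)) (by simp)
      omega
  have hA : ∀ i : Fin n, i.val < a → (π i).val = i.val + (n - a) := by
    intro i hi
    have hlow := IA i.val i hi rfl
    have hjB : n - a ≤ (π i).val := hw i hi
    have hup := IB ((π i).val - (n - a)) (π i) hjB (by omega)
    rw [hinv i] at hup
    omega
  refine ⟨hA, ?_, ?_⟩
  · -- middle fixed
    intro i hi1 hi2
    have hMi : a ≤ (π i).val ∧ (π i).val < n - a := by
      constructor
      · by_contra hc
        push_neg at hc
        have := hA (π i) hc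
        rw [hinv i] at this
        omega
      · by_contra hc
        push_neg at hc
        have := hBA (π i) hc
        rw [hinv i] at this
        omega
    by_contra hne
    have hne' : π i ≠ i := hne
    -- p = min position, q = max, π p = q, π q = p
    obtain ⟨p, q, hpq, hπp, hπq, hpM1, hpM2, hqM1, hqM2⟩ :
        ∃ p q : Fin n, p < q ∧ π p = q ∧ π q = p ∧ a ≤ p.val ∧ p.val < n - a ∧
          a ≤ q.val ∧ q.val < n - a := by
      rcases lt_or_ge i (π i) with h | h
      · exact ⟨i, π i, h, rfl, hinv i, hi1, hi2, hMi.1, hMi.2⟩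
      · have h' : π i < i := lt_of_le_of_ne h hne
        exact ⟨π i, i, h', hinv i, rfl, hMi.1, hMi.2, hi1, hi2⟩
    have h0 : (0 : ℕ) < n := by omega
    have hlast : n - 1 < n := by omega
    have hv0 : (π ⟨0, h0⟩).val = n - a := by rw [hA ⟨0, h0⟩ (by simpa using ha0)]; simp
    have hvl : (π ⟨n - 1, hlast⟩).val = a - 1 := by
      have hj : n - a ≤ n - 1 := by omega
      have hBAl := hBA ⟨n - 1, hlast⟩ (by simpa using hj)
      have := hA (π ⟨n - 1, hlast⟩) hBAl
      rw [hinv] at this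
      simp at this
      omega
    refine hav ⟨⟨0, h0⟩, p, q, ⟨n - 1, hlast⟩, ?_, hpq, ?_, ?_, ?_, ?_⟩
    · exact Fin.lt_def.mpr (by simp; omega)
    · exact Fin.lt_def.mpr (by simp; omega)
    · rw [hπq]; exact Fin.lt_def.mpr (by omega)
    · rw [hπq, hπp]; exact hpq
    · rw [hπp]; exact Fin.lt_def.mpr (by omega)
  · intro i hi
    have h1 := hBA i hi
    have h2 := hA (π i) h1
    rw [hinv i] at h2
    omega

lemma classify {n : ℕ} (π : Equiv.Perm (Fin n)) (hinv : Function.Involutive ⇑π)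
    (hav : Avoids4321 π) (a : ℕ) (ha0 : 0 < a) (han : a < n)
    (hw : ∀ i : Fin n, i.val < a → n - a ≤ (π i).val) :
    ∃ k : ℕ, 0 < k ∧ 2 * k ≤ n ∧
      (∀ i : Fin n, i.val < k → (π i).val = i.val + (n - k)) ∧
      (∀ i : Fin n, k ≤ i.val → i.val < n - k → π i = i) ∧
      (∀ i : Fin n, n - k ≤ i.val → (π i).val = i.val - (n - k)) := by
  rcases le_or_gt (2 * a) n with h | h
  · exact ⟨a, ha0, h, classify_aux π hinv hav a ha0 h hw⟩
  · refine ⟨n - a, by omega, by omega, classify_aux π hinv hav (n - a) (by omega) (by omega) ?_⟩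
    intro i hi
    have h1 := hw i (by omega)
    by_contra hc
    push_neg at hc
    have h2 : (π i).val < a := by omega
    have h3 := hw (π i) h2
    rw [hinv i] at h3
    omega

/-- the skew involution 321[1^k,1^m,1^k] -/
def sigFun (n k : ℕ) : Fin n → Fin n := fun i =>
  if h : i.val < k ∧ 2 * k ≤ n then ⟨i.val + (n - k), by omega⟩
  else if h2 : n - k ≤ i.val then ⟨i.val - (n - k), by have := i.2; omega⟩ else i

lemma sigFun_lt {n k : ℕ} (h2k : 2 * k ≤ n) (i : Fin n) (hi : i.val < k) :
    (sigFun n k i).val = i.val + (n - k) := by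
  simp only [sigFun]; rw [dif_pos ⟨hi, h2k⟩]

lemma sigFun_ge {n k : ℕ} (hk : 0 < k) (h2k : 2 * k ≤ n) (i : Fin n) (hi : n - k ≤ i.val) :
    (sigFun n k i).val = i.val - (n - k) := by
  have := i.2
  simp only [sigFun]
  rw [dif_neg (by omega), dif_pos hi]

lemma sigFun_mid {n k : ℕ} (i : Fin n) (hi1 : k ≤ i.val) (hi2 : i.val < n - k) :
    sigFun n k i = i := by
  simp only [sigFun]
  rw [dif_neg (by omega), dif_neg (by omega)]

lemma sigFun_invol {n k : ℕ} (hk : 0 < k) (h2k : 2 * k ≤ n) :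
    Function.Involutive (sigFun n k) := by
  intro i
  rcases lt_or_ge i.val k with h | h
  · have h1 := sigFun_lt h2k i h
    have h2 : n - k ≤ (sigFun n k i).val := by omega
    apply Fin.ext
    rw [sigFun_ge hk h2k _ h2, h1]; omega
  · rcases lt_or_ge i.val (n - k) with h' | h'
    · rw [sigFun_mid i h h', sigFun_mid i h h']
    · have h1 := sigFun_ge hk h2k i h'
      have := i.2
      have h2 : (sigFun n k i).val < k := by omega
      apply Fin.ext
      rw [sigFun_lt h2k _ h2, h1]; omega

/-- run index -/
def runIdx (n k : ℕ) (i : Fin n) : ℕ := if i.val < k then 0 else if i.val < n - k then 1 else 2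

lemma sigFun_spec {n k : ℕ} (hk : 0 < k) (h2k : 2 * k ≤ n) (i : Fin n) :
    (i.val < k ∧ (sigFun n k i).val = i.val + (n - k)) ∨
    (k ≤ i.val ∧ i.val < n - k ∧ (sigFun n k i).val = i.val) ∨
    (n - k ≤ i.val ∧ (sigFun n k i).val = i.val - (n - k)) := by
  rcases lt_or_ge i.val k with h | h
  · exact Or.inl ⟨h, sigFun_lt h2k i h⟩
  · rcases lt_or_ge i.val (n - k) with h' | h'
    · exact Or.inr (Or.inl ⟨h, h', by rw [sigFun_mid i h h']⟩)
    · exact Or.inr (Or.inr ⟨h', sigFun_ge hk h2k i h'⟩)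

lemma sig_avoids {n k : ℕ} (hk : 0 < k) (h2k : 2 * k ≤ n) :
    Avoids4321 ((sigFun_invol hk h2k).toPerm) := by
  rintro ⟨a, b, c, d, hab, hbc, hcd, h1, h2, h3⟩
  simp only [Function.Involutive.coe_toPerm] at h1 h2 h3
  have key : ∀ x y : Fin n, x < y → sigFun n k y < sigFun n k x →
      runIdx n k x < runIdx n k y := by
    intro x y hxy hv
    have hxy' : x.val < y.val := hxy
    have hv' : (sigFun n k y).val < (sigFun n k x).val := hv
    have sx := sigFun_spec hk h2k x
    have sy := sigFun_spec hk h2k y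
    have hx2 := x.2; have hy2 := y.2
    unfold runIdx
    split_ifs <;> rcases sx with ⟨_,_⟩|⟨_,_,_⟩|⟨_,_⟩ <;> rcases sy with ⟨_,_⟩|⟨_,_,_⟩|⟨_,_⟩ <;> omega
  have k1 := key a b hab h3
  have k2 := key b c hbc h2
  have k3 := key c d hcd h1
  have : runIdx n k a ≥ 0 := Nat.zero_le _
  have hd : runIdx n k d ≤ 2 := by unfold runIdx; split_ifs <;> omega
  omega

lemma ps : (1 - PowerSeries.X ^ 2) * (1 - PowerSeries.X) *
    (PowerSeries.mk fun n => ((n / 2 : ℕ) : ℚ)) = PowerSeries.X ^ 2 := by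
  have expand : (1 - PowerSeries.X ^ 2) * (1 - PowerSeries.X) *
      (PowerSeries.mk fun n => ((n / 2 : ℕ) : ℚ)) =
      (PowerSeries.mk fun n => ((n / 2 : ℕ) : ℚ)) -
      (PowerSeries.mk fun n => ((n / 2 : ℕ) : ℚ)) * PowerSeries.X -
      (PowerSeries.mk fun n => ((n / 2 : ℕ) : ℚ)) * PowerSeries.X ^ 2 +
      (PowerSeries.mk fun n => ((n / 2 : ℕ) : ℚ)) * PowerSeries.X ^ 3 := by
    ring
  rw [expand]
  ext n
  rw [map_add, map_sub, map_sub]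
  have h1 : (PowerSeries.mk fun n => ((n / 2 : ℕ) : ℚ)) * PowerSeries.X =
      (PowerSeries.mk fun n => ((n / 2 : ℕ) : ℚ)) * PowerSeries.X ^ 1 := by ring
  rw [h1, PowerSeries.coeff_mul_X_pow', PowerSeries.coeff_mul_X_pow',
    PowerSeries.coeff_mul_X_pow', PowerSeries.coeff_X_pow, PowerSeries.coeff_mk,
    PowerSeries.coeff_mk, PowerSeries.coeff_mk, PowerSeries.coeff_mk]
  match n with
  | 0 => norm_num
  | 1 => norm_num
  | 2 => norm_num
  | 3 => norm_num
  | (m + 4) =>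
    have e1 : (m + 4) / 2 = (m + 2) / 2 + 1 := by omega
    have e2 : (m + 4 - 1) / 2 = (m + 4 - 3) / 2 + 1 := by omega
    have e3 : m + 4 - 2 = m + 2 := by omega
    rw [if_pos (by omega), if_pos (by omega), if_pos (by omega), if_neg (by omega), e1, e2, e3]
    push_cast
    ring

lemma skewCount_eq (n : ℕ) : skewCount n = n / 2 := by
  have h2K : ∀ k : Fin (n / 2), 2 * (k.val + 1) ≤ n := fun k => by have := k.2; omega
  have hK0 : ∀ k : Fin (n / 2), 0 < k.val + 1 := fun k => Nat.succ_pos _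
  let Φ : Fin (n / 2) → {π : Equiv.Perm (Fin n) // Function.Involutive ⇑π ∧ Avoids4321 π ∧
      ∃ a : ℕ, 0 < a ∧ a < n ∧ ∀ i : Fin n, i.val < a → n - a ≤ (π i).val} :=
    fun k => ⟨(sigFun_invol (hK0 k) (h2K k)).toPerm,
      by rw [Function.Involutive.coe_toPerm]; exact sigFun_invol (hK0 k) (h2K k),
      sig_avoids (hK0 k) (h2K k),
      k.val + 1, Nat.succ_pos _, by have := h2K k; omega,
      fun i hi => by
        rw [Function.Involutive.coe_toPerm, sigFun_lt (h2K k) i hi]; omega⟩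
  have hbij : Function.Bijective Φ := by
    constructor
    · intro j k h
      have h0 : 0 < n := by have := j.2; omega
      have hv := congrArg (fun e => ((e.1 : Equiv.Perm (Fin n)) ⟨0, h0⟩).val) h
      simp only [Φ, Function.Involutive.coe_toPerm] at hv
      rw [sigFun_lt (h2K j) ⟨0, h0⟩ (Nat.succ_pos _),
        sigFun_lt (h2K k) ⟨0, h0⟩ (Nat.succ_pos _)] at hv
      have hj := h2K j; have hk := h2K k
      exact Fin.ext (by omega)
    · rintro ⟨π, hinv, hav, a, ha0, han, hw⟩
      obtain ⟨k, hk0, hk2, hA, hM, hB⟩ := classify π hinv hav a ha0 han hw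
      refine ⟨⟨k - 1, by omega⟩, ?_⟩
      apply Subtype.ext
      apply Equiv.ext
      intro i
      show sigFun n ((⟨k - 1, by omega⟩ : Fin (n / 2)).val + 1) i = π i
      have hk1 : (⟨k - 1, by omega⟩ : Fin (n / 2)).val + 1 = k := by simp; omega
      rw [hk1]
      rcases lt_or_ge i.val k with h | h
      · exact Fin.ext (by rw [sigFun_lt hk2 i h, hA i h])
      · rcases lt_or_ge i.val (n - k) with h' | h'
        · rw [sigFun_mid i h h', hM i h h']
        · exact Fin.ext (by rw [sigFun_ge hk0 hk2 i h', hB i h'])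
  rw [skewCount, ← Nat.card_eq_of_bijective Φ hbij, Nat.card_eq_fintype_card, Fintype.card_fin]

/-- The generating function of skew-decomposable 4321-avoiding involutions is
`x^2 / ((1-x^2)(1-x))`; equivalently their number in length `n ≥ 2` is `⌊n/2⌋`. -/
theorem stmt8 :
    (∀ n : ℕ, 2 ≤ n → skewCount n = n / 2) ∧
    (1 - PowerSeries.X ^ 2) * (1 - PowerSeries.X) *
        (PowerSeries.mk fun n => (skewCount n : ℚ)) = PowerSeries.X ^ 2 := by
  refine ⟨fun n _ => skewCount_eq n, ?_⟩
  have hmk : (PowerSeries.mk fun n => (skewCount n : ℚ)) =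
      PowerSeries.mk fun n => ((n / 2 : ℕ) : ℚ) := by
    ext n
    rw [PowerSeries.coeff_mk, PowerSeries.coeff_mk, skewCount_eq]
  rw [hmk]
  exact ps
end

section
/- The generating function in two variables of 4321-avoiding involutions, where x marks the length and y the number of fixed points, is f(x,y) = (1 − xy − √(1 − 2xy + x²y² − 4x²))/(2x²); equivalently, the number of 4321-avoiding involutions of length n with k fixed points equals the number of Motzkin paths of length n with k horizontal steps. -/
open Equiv Finset

/-- Number of 4321-avoiding involutions of length `n` with `k` fixed points. -/
noncomputable def invCount4321 (n k : ℕ) : ℕ :=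
  Nat.card {π : Equiv.Perm (Fin n) // Function.Involutive ⇑π ∧ Avoids4321 π ∧
    (Finset.univ.filter fun i : Fin n => π i = i).card = k}

/-- Number of Motzkin paths of length `n` with `k` horizontal steps. -/
noncomputable def motzkinHCount (n k : ℕ) : ℕ :=
  Nat.card {l : List ℤ // IsMotzkinPath l ∧ l.length = n ∧ l.count 0 = k}

namespace Stmt9

open Finset

lemma invStep_cases {n : ℕ} (π : Equiv.Perm (Fin n)) (i : Fin n) :
    invStep π i = 1 ∨ invStep π i = 0 ∨ invStep π i = -1 := by
  unfold invStep; split_ifs <;> simp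

lemma invStep_eq_zero {n : ℕ} {π : Equiv.Perm (Fin n)} {i : Fin n} :
    invStep π i = 0 ↔ π i = i := by
  unfold invStep; split_ifs with h1 h2
  · simp [h1]
  · norm_num [h1]
  · norm_num [h1]

lemma invStep_eq_one {n : ℕ} {π : Equiv.Perm (Fin n)} {i : Fin n} :
    invStep π i = 1 ↔ i < π i := by
  unfold invStep; split_ifs with h1 h2
  · norm_num [h1]
  · simp [h2]
  · norm_num [h2]

lemma invStep_eq_negone {n : ℕ} {π : Equiv.Perm (Fin n)} {i : Fin n} :
    invStep π i = -1 ↔ π i < i := by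
  unfold invStep; split_ifs with h1 h2
  · norm_num [h1]
  · norm_num [asymm h2]
  · simp [lt_of_le_of_ne (le_of_not_gt h2) h1]

/-- sum of a ±1/0 valued function as difference of cardinalities -/
lemma sum_pm {ι : Type*} [DecidableEq ι] (s : Finset ι) (f : ι → ℤ)
    (hf : ∀ i ∈ s, f i = 1 ∨ f i = 0 ∨ f i = -1) :
    ∑ i ∈ s, f i = ((s.filter fun i => f i = 1).card : ℤ)
      - ((s.filter fun i => f i = -1).card : ℤ) := by
  classical
  have h : ∀ i ∈ s, f i = (if f i = 1 then (1:ℤ) else 0) - (if f i = -1 then 1 else 0) := by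
    intro i hi; rcases hf i hi with h|h|h <;> simp [h]
  rw [Finset.sum_congr rfl h, Finset.sum_sub_distrib, Finset.sum_boole, Finset.sum_boole]

lemma count_ofFn {n : ℕ} (f : Fin n → ℤ) (a : ℤ) :
    (List.ofFn f).count a = ((univ : Finset (Fin n)).filter fun i => f i = a).card := by
  classical
  induction n with
  | zero => simp
  | succ m ih =>
    rw [List.ofFn_succ, List.count_cons, ih (fun i => f i.succ),
      Finset.card_filter (fun i : Fin m => f i.succ = a), Finset.card_filter (fun i : Fin (m+1) => f i = a),
      Fin.sum_univ_succ]
    simp only [beq_iff_eq]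
    ring

lemma sum_take_ofFn {n : ℕ} (f : Fin n → ℤ) (t : ℕ) :
    ((List.ofFn f).take t).sum
      = ∑ i ∈ (univ : Finset (Fin n)).filter (fun i => i.val < t), f i := by
  classical
  induction n generalizing t with
  | zero => simp
  | succ m ih =>
    cases t with
    | zero => simp
    | succ s =>
      rw [List.ofFn_succ, List.take_succ_cons, List.sum_cons, ih (fun i => f i.succ) s,
        Finset.sum_filter, Finset.sum_filter, Fin.sum_univ_succ]
      simp [Nat.succ_lt_succ_iff]

end Stmt9

namespace Stmt9

open Finset

/-- avoiding 4321 implies no nesting of excedance arcs -/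
lemma nonnesting_of_avoids {n : ℕ} {π : Equiv.Perm (Fin n)}
    (hinv : Function.Involutive π) (hav : Avoids4321 π)
    {a b : Fin n} (hab : a < b) (ha : a < π a) (hb : b < π b) : π a < π b := by
  by_contra h
  push_neg at h
  have hne : π b ≠ π a := fun e => absurd (π.injective e) hab.ne'
  have hlt : π b < π a := lt_of_le_of_ne h hne
  exact hav ⟨a, b, π b, π a, hab, hb, hlt, by
    rw [hinv, hinv]; exact ⟨hab, hb, hlt⟩⟩

/-- no nesting implies avoiding 4321 -/
lemma avoids_of_nonnesting {n : ℕ} {π : Equiv.Perm (Fin n)}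
    (hinv : Function.Involutive π)
    (hnn : ∀ a b : Fin n, a < b → a < π a → b < π b → π a < π b) :
    Avoids4321 π := by
  rintro ⟨a, b, c, d, hab, hbc, hcd, h1, h2, h3⟩
  have key : ∀ x y : Fin n, x < y → π y < π x → invStep π x ≠ invStep π y := by
    intro x y hxy hv he
    rcases invStep_cases π x with h | h | h
    · -- both excedances
      have hx : x < π x := invStep_eq_one.mp h
      have hy : y < π y := invStep_eq_one.mp (by rw [← he]; exact h)
      exact absurd (hnn x y hxy hx hy) (asymm hv)
    · -- both fixed
      have hx : π x = x := invStep_eq_zero.mp h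
      have hy : π y = y := invStep_eq_zero.mp (by rw [← he]; exact h)
      rw [hx, hy] at hv
      exact absurd hv (asymm hxy)
    · -- both deficiencies
      have hx : π x < x := invStep_eq_negone.mp h
      have hy : π y < y := invStep_eq_negone.mp (by rw [← he]; exact h)
      have := hnn (π y) (π x) hv (by rw [hinv]; exact hy) (by rw [hinv]; exact hx)
      rw [hinv, hinv] at this
      exact absurd this (asymm hxy)
  have k1 := key a b hab h3
  have k2 := key a c (hab.trans hbc) (h2.trans h3)
  have k3 := key a d ((hab.trans hbc).trans hcd) (h1.trans (h2.trans h3))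
  have k4 := key b c hbc h2
  have k5 := key b d (hbc.trans hcd) (h1.trans h2)
  have k6 := key c d hcd h1
  rcases invStep_cases π a with ha | ha | ha <;>
    rcases invStep_cases π b with hb | hb | hb <;>
      rcases invStep_cases π c with hc | hc | hc <;>
        rcases invStep_cases π d with hd | hd | hd <;>
          omega

/-- excedance and deficiency finsets -/
def Eset {n : ℕ} (π : Equiv.Perm (Fin n)) : Finset (Fin n) :=
  univ.filter fun i => i < π i

def Dset {n : ℕ} (π : Equiv.Perm (Fin n)) : Finset (Fin n) :=
  univ.filter fun i => π i < i

lemma filter_one_eq_Eset {n : ℕ} (π : Equiv.Perm (Fin n)) :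
    (univ.filter fun i => invStep π i = 1) = Eset π := by
  apply Finset.filter_congr; intro i _; simpa using invStep_eq_one

lemma filter_negone_eq_Dset {n : ℕ} (π : Equiv.Perm (Fin n)) :
    (univ.filter fun i => invStep π i = -1) = Dset π := by
  apply Finset.filter_congr; intro i _; simpa using invStep_eq_negone

lemma mem_Eset {n : ℕ} {π : Equiv.Perm (Fin n)} {i : Fin n} : i ∈ Eset π ↔ i < π i := by
  simp [Eset]

lemma mem_Dset {n : ℕ} {π : Equiv.Perm (Fin n)} {i : Fin n} : i ∈ Dset π ↔ π i < i := by
  simp [Dset]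

lemma apply_mem_Dset {n : ℕ} {π : Equiv.Perm (Fin n)} (hinv : Function.Involutive π)
    {i : Fin n} (hi : i ∈ Eset π) : π i ∈ Dset π := by
  rw [mem_Dset, hinv]; exact mem_Eset.mp hi

lemma apply_mem_Eset {n : ℕ} {π : Equiv.Perm (Fin n)} (hinv : Function.Involutive π)
    {i : Fin n} (hi : i ∈ Dset π) : π i ∈ Eset π := by
  rw [mem_Eset, hinv]; exact mem_Dset.mp hi

/-- prefix counts : at any threshold, at least as many excedances as deficiencies -/
lemma prefix_count {n : ℕ} {π : Equiv.Perm (Fin n)} (hinv : Function.Involutive π) (t : ℕ) :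
    ((Dset π).filter fun i => i.val < t).card ≤ ((Eset π).filter fun i => i.val < t).card := by
  apply Finset.card_le_card_of_injOn π
  · intro d hd
    rw [Finset.mem_coe, Finset.mem_filter] at hd ⊢
    refine ⟨apply_mem_Eset hinv hd.1, ?_⟩
    have : π d < d := mem_Dset.mp hd.1
    exact lt_of_lt_of_le (Fin.lt_def.mp this) (le_of_lt hd.2)
  · exact fun x _ y _ h => π.injective h

lemma card_Eset_eq {n : ℕ} {π : Equiv.Perm (Fin n)} (hinv : Function.Involutive π) :
    (Eset π).card = (Dset π).card := by
  apply Finset.card_bij (fun a _ => π a)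
  · exact fun a ha => apply_mem_Dset hinv ha
  · exact fun x _ y _ h => π.injective h
  · exact fun b hb => ⟨π b, apply_mem_Eset hinv hb, hinv b⟩

/-- the path of an involution is a Motzkin path -/
lemma isMotzkin_ofFn_invStep {n : ℕ} {π : Equiv.Perm (Fin n)}
    (hinv : Function.Involutive π) : IsMotzkinPath (List.ofFn (invStep π)) := by
  classical
  refine ⟨?_, ?_, ?_⟩
  · intro s hs
    rw [List.mem_ofFn] at hs
    obtain ⟨i, rfl⟩ := hs
    exact invStep_cases π i
  · rw [List.sum_ofFn, sum_pm _ _ (fun i _ => invStep_cases π i),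
      filter_one_eq_Eset, filter_negone_eq_Dset, card_Eset_eq hinv]
    ring
  · intro p hp
    rw [List.prefix_iff_eq_take] at hp
    rw [hp, sum_take_ofFn, sum_pm _ _ (fun i _ => invStep_cases π i),
      Finset.filter_filter, Finset.filter_filter]
    have e1 : (univ.filter fun i : Fin n => i.val < p.length ∧ invStep π i = 1)
        = (Eset π).filter fun i => i.val < p.length := by
      rw [Eset, Finset.filter_filter]
      apply Finset.filter_congr
      intro i _
      simp [invStep_eq_one, and_comm]
    have e2 : (univ.filter fun i : Fin n => i.val < p.length ∧ invStep π i = -1)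
        = (Dset π).filter fun i => i.val < p.length := by
      rw [Dset, Finset.filter_filter]
      apply Finset.filter_congr
      intro i _
      simp [invStep_eq_negone, and_comm]
    rw [e1, e2]
    have := prefix_count hinv (π := π) p.length
    omega

end Stmt9

namespace Stmt9

open Finset

lemma eq_of_invStep_eq {n : ℕ} {π₁ π₂ : Equiv.Perm (Fin n)}
    (h1 : Function.Involutive π₁) (h2 : Function.Involutive π₂)
    (ha1 : Avoids4321 π₁) (ha2 : Avoids4321 π₂)
    (hs : invStep π₁ = invStep π₂) : π₁ = π₂ := by
  classical
  have hE : Eset π₁ = Eset π₂ := by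
    rw [← filter_one_eq_Eset, ← filter_one_eq_Eset, hs]
  have hD : Dset π₁ = Dset π₂ := by
    rw [← filter_negone_eq_Dset, ← filter_negone_eq_Dset, hs]
  have mk : ∀ (π : Equiv.Perm (Fin n)), Function.Involutive π → Avoids4321 π →
      ∀ (_ : Eset π = Eset π₁) (_ : Dset π = Dset π₁),
      ∃ o : {x // x ∈ Eset π₁} ≃o {x // x ∈ Dset π₁},
        ∀ x : {x // x ∈ Eset π₁}, (o x : Fin n) = π x := by
    intro π hi hav hEq hDq
    have hmemD : ∀ x : {x // x ∈ Eset π₁}, π x ∈ Dset π₁ := by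
      intro x
      have hx : (x : Fin n) ∈ Eset π := by rw [hEq]; exact x.2
      rw [← hDq]; exact apply_mem_Dset hi hx
    have hmemE : ∀ d : {x // x ∈ Dset π₁}, π d ∈ Eset π₁ := by
      intro d
      have hd : (d : Fin n) ∈ Dset π := by rw [hDq]; exact d.2
      rw [← hEq]; exact apply_mem_Eset hi hd
    refine ⟨StrictMono.orderIsoOfSurjective
      (fun x => ⟨π x, hmemD x⟩) ?_ ?_, fun x => rfl⟩
    · intro x y hxy
      have hx : (x : Fin n) < π x := mem_Eset.mp (by rw [hEq]; exact x.2)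
      have hy : (y : Fin n) < π y := mem_Eset.mp (by rw [hEq]; exact y.2)
      exact Subtype.mk_lt_mk.mpr (nonnesting_of_avoids hi hav (Subtype.coe_lt_coe.mpr hxy) hx hy)
    · intro d
      refine ⟨⟨π d, hmemE d⟩, ?_⟩
      apply Subtype.ext
      exact hi d
  obtain ⟨o1, ho1⟩ := mk π₁ h1 ha1 rfl rfl
  obtain ⟨o2, ho2⟩ := mk π₂ h2 ha2 hE.symm hD.symm
  have hoo : o1 = o2 := Subsingleton.elim _ _
  have hU : ∀ x : Fin n, x ∈ Eset π₁ → π₁ x = π₂ x := by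
    intro x hx
    have := congrArg (fun o => ((o ⟨x, hx⟩ : {x // x ∈ Dset π₁}) : Fin n)) hoo
    simpa [ho1, ho2] using this
  apply Equiv.ext
  intro x
  rcases invStep_cases π₁ x with h | h | h
  · exact hU x (mem_Eset.mpr (invStep_eq_one.mp h))
  · have e1 : π₁ x = x := invStep_eq_zero.mp h
    have e2 : π₂ x = x := invStep_eq_zero.mp (by rw [← congrFun hs x]; exact h)
    rw [e1, e2]
  · have hx1 : π₁ x ∈ Eset π₁ := apply_mem_Eset h1 (mem_Dset.mpr (invStep_eq_negone.mp h))
    have hxx := hU (π₁ x) hx1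
    rw [h1 x] at hxx
    apply π₂.injective
    rw [h2 x]
    exact hxx.symm

end Stmt9

namespace Stmt9

open Finset

lemma exists_involution (l : List ℤ) (hm : IsMotzkinPath l) :
    ∃ π : Equiv.Perm (Fin l.length), Function.Involutive π ∧ Avoids4321 π ∧
      List.ofFn (invStep π) = l := by
  classical
  obtain ⟨hsteps, hsum, hpref⟩ := hm
  have hl : List.ofFn l.get = l := List.ofFn_get l
  have hf : ∀ i : Fin l.length, l.get i = 1 ∨ l.get i = 0 ∨ l.get i = -1 :=
    fun i => hsteps _ (List.get_mem l i)
  set U : Finset (Fin l.length) := univ.filter (fun i => l.get i = 1) with hU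
  set D : Finset (Fin l.length) := univ.filter (fun i => l.get i = -1) with hD
  have hUD : D.card = U.card := by
    have h0 : (List.ofFn l.get).sum = 0 := by rw [hl]; exact hsum
    rw [List.sum_ofFn, sum_pm _ _ (fun i _ => hf i)] at h0
    rw [← hU, ← hD] at h0
    omega
  set oU : Fin U.card ≃o {x // x ∈ U} := U.orderIsoOfFin rfl with hoU
  set oD : Fin U.card ≃o {x // x ∈ D} := D.orderIsoOfFin hUD with hoD
  have hgetU : ∀ j : Fin U.card, l.get (oU j : Fin l.length) = 1 :=
    fun j => (Finset.mem_filter.mp (oU j).2).2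
  have hgetD : ∀ j : Fin U.card, l.get (oD j : Fin l.length) = -1 :=
    fun j => (Finset.mem_filter.mp (oD j).2).2
  -- key: the j-th up step is before the j-th down step
  have hud : ∀ j : Fin U.card, (oU j : Fin l.length) < (oD j : Fin l.length) := by
    intro j
    by_contra hle
    push_neg at hle
    have hne : (oD j : Fin l.length) ≠ (oU j : Fin l.length) := by
      intro e
      have h1 := hgetD j
      rw [e, hgetU j] at h1; omega
    have hlt : (oD j : Fin l.length) < oU j := lt_of_le_of_ne hle hne
    set t := ((oD j : Fin l.length) : ℕ) + 1 with ht
    have hpre := hpref _ (List.take_prefix t l)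
    have e1 : (l.take t).sum
        = ∑ i ∈ univ.filter (fun i : Fin l.length => i.val < t), l.get i := by
      conv_lhs => rw [← hl]
      exact sum_take_ofFn _ _
    rw [e1, sum_pm _ _ (fun i _ => hf i), Finset.filter_filter, Finset.filter_filter] at hpre
    have hUb : (univ.filter (fun i : Fin l.length => i.val < t ∧ l.get i = 1)).card ≤ j.val := by
      have hsub : (univ.filter (fun i : Fin l.length => i.val < t ∧ l.get i = 1))
          ⊆ (Finset.Iio j).image (fun i => (oU i : Fin l.length)) := by
        intro x hx
        rw [Finset.mem_filter] at hx
        have hxU : x ∈ U := Finset.mem_filter.mpr ⟨Finset.mem_univ _, hx.2.2⟩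
        have hoUi : (oU (oU.symm ⟨x, hxU⟩) : Fin l.length) = x := by
          rw [OrderIso.apply_symm_apply]
        have hxlt : x < (oU j : Fin l.length) := by
          have h1 : x.val < t := hx.2.1
          have hxle : x ≤ (oD j : Fin l.length) := by
            rw [Fin.le_def]; omega
          have hne2 : x ≠ (oD j : Fin l.length) := by
            intro e
            have hd := hgetD j
            rw [← e, hx.2.2] at hd; omega
          exact lt_of_lt_of_le (lt_of_le_of_ne hxle hne2) (le_of_lt hlt)
        have hij : oU.symm ⟨x, hxU⟩ < j := by
          rw [← oU.lt_iff_lt]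
          rw [← Subtype.coe_lt_coe, hoUi]
          exact hxlt
        exact Finset.mem_image.mpr ⟨_, Finset.mem_Iio.mpr hij, hoUi⟩
      calc (univ.filter (fun i : Fin l.length => i.val < t ∧ l.get i = 1)).card
          ≤ ((Finset.Iio j).image (fun i => (oU i : Fin l.length))).card :=
            Finset.card_le_card hsub
        _ ≤ (Finset.Iio j).card := Finset.card_image_le
        _ = j.val := Fin.card_Iio j
    have hDb : j.val + 1
        ≤ (univ.filter (fun i : Fin l.length => i.val < t ∧ l.get i = -1)).card := by
      have hinj : Function.Injective (fun i : Fin U.card => (oD i : Fin l.length)) :=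
        fun a b h => oD.injective (Subtype.ext h)
      have hsub : (Finset.Iic j).image (fun i => (oD i : Fin l.length))
          ⊆ univ.filter (fun i : Fin l.length => i.val < t ∧ l.get i = -1) := by
        intro x hx
        rw [Finset.mem_image] at hx
        obtain ⟨i, hi, rfl⟩ := hx
        rw [Finset.mem_filter]
        refine ⟨Finset.mem_univ _, ?_, hgetD i⟩
        have hmono : (oD i : Fin l.length) ≤ oD j :=
          Subtype.coe_le_coe.mpr (oD.monotone (Finset.mem_Iic.mp hi))
        rw [Fin.le_def] at hmono; omega
      calc j.val + 1 = (Finset.Iic j).card := (Fin.card_Iic j).symm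
        _ = ((Finset.Iic j).image (fun i => (oD i : Fin l.length))).card :=
            (Finset.card_image_of_injective _ hinj).symm
        _ ≤ _ := Finset.card_le_card hsub
    omega
  -- the involution
  set g : Fin l.length → Fin l.length := fun x =>
    if hx : x ∈ U then (oD (oU.symm ⟨x, hx⟩) : Fin l.length)
    else if hx : x ∈ D then (oU (oD.symm ⟨x, hx⟩) : Fin l.length) else x with hg
  have hUnotD : ∀ x : Fin l.length, x ∈ U → x ∉ D := by
    intro x hx hd
    rw [hU, Finset.mem_filter] at hx
    rw [hD, Finset.mem_filter] at hd
    omega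
  have hgU : ∀ (x : Fin l.length) (hx : x ∈ U),
      g x = (oD (oU.symm ⟨x, hx⟩) : Fin l.length) := by
    intro x hx; rw [hg]; exact dif_pos hx
  have hgD : ∀ (x : Fin l.length) (hx : x ∈ D),
      g x = (oU (oD.symm ⟨x, hx⟩) : Fin l.length) := by
    intro x hx; rw [hg]; dsimp only
    rw [dif_neg (fun hu => hUnotD x hu hx), dif_pos hx]
  have hgF : ∀ x : Fin l.length, x ∉ U → x ∉ D → g x = x := by
    intro x hx hd; rw [hg]; dsimp only
    rw [dif_neg hx, dif_neg hd]
  have hinvol : Function.Involutive g := by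
    intro x
    by_cases hx : x ∈ U
    · rw [hgU x hx]
      have hmem : (oD (oU.symm ⟨x, hx⟩) : Fin l.length) ∈ D := (oD _).2
      rw [hgD _ hmem]
      have e : (⟨(oD (oU.symm ⟨x, hx⟩) : Fin l.length), hmem⟩ : {y // y ∈ D})
          = oD (oU.symm ⟨x, hx⟩) := Subtype.ext rfl
      rw [e, OrderIso.symm_apply_apply, OrderIso.apply_symm_apply]
    · by_cases hd : x ∈ D
      · rw [hgD x hd]
        have hmem : (oU (oD.symm ⟨x, hd⟩) : Fin l.length) ∈ U := (oU _).2
        rw [hgU _ hmem]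
        have e : (⟨(oU (oD.symm ⟨x, hd⟩) : Fin l.length), hmem⟩ : {y // y ∈ U})
            = oU (oD.symm ⟨x, hd⟩) := Subtype.ext rfl
        rw [e, OrderIso.symm_apply_apply, OrderIso.apply_symm_apply]
      · rw [hgF x hx hd, hgF x hx hd]
  have hgxU : ∀ (x : Fin l.length), x ∈ U → x < g x := by
    intro x hx
    rw [hgU x hx]
    have e : (oU (oU.symm ⟨x, hx⟩) : Fin l.length) = x := by rw [OrderIso.apply_symm_apply]
    have h2 := hud (oU.symm ⟨x, hx⟩)
    rw [e] at h2
    exact h2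
  have hgxD : ∀ (x : Fin l.length), x ∈ D → g x < x := by
    intro x hx
    rw [hgD x hx]
    have e : (oD (oD.symm ⟨x, hx⟩) : Fin l.length) = x := by rw [OrderIso.apply_symm_apply]
    have h2 := hud (oD.symm ⟨x, hx⟩)
    rw [e] at h2
    exact h2
  refine ⟨hinvol.toPerm g, hinvol, ?_, ?_⟩
  · -- avoids 4321
    apply avoids_of_nonnesting hinvol
    intro a b hab ha hb
    have hcoe : ⇑(hinvol.toPerm g) = g := rfl
    rw [hcoe] at ha hb ⊢
    have haU : a ∈ U := by
      by_contra h
      by_cases hd : a ∈ D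
      · exact absurd (hgxD a hd) (asymm ha)
      · rw [hgF a h hd] at ha; exact lt_irrefl _ ha
    have hbU : b ∈ U := by
      by_contra h
      by_cases hd : b ∈ D
      · exact absurd (hgxD b hd) (asymm hb)
      · rw [hgF b h hd] at hb; exact lt_irrefl _ hb
    rw [hgU a haU, hgU b hbU, Subtype.coe_lt_coe]
    apply oD.strictMono
    rw [← oU.lt_iff_lt, OrderIso.apply_symm_apply, OrderIso.apply_symm_apply]
    exact Subtype.mk_lt_mk.mpr hab
  · -- the path of the constructed involution is l
    have hstep : ∀ i : Fin l.length, invStep (hinvol.toPerm g) i = l.get i := by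
      intro i
      have hcoe : (hinvol.toPerm g) i = g i := rfl
      by_cases hx : i ∈ U
      · rw [show l.get i = 1 from (Finset.mem_filter.mp hx).2]
        rw [invStep_eq_one, hcoe]
        exact hgxU i hx
      · by_cases hd : i ∈ D
        · rw [show l.get i = -1 from (Finset.mem_filter.mp hd).2]
          rw [invStep_eq_negone, hcoe]
          exact hgxD i hd
        · have : l.get i = 0 := by
            rcases hf i with h | h | h
            · exact absurd (show i ∈ U from Finset.mem_filter.mpr ⟨Finset.mem_univ _, h⟩) hx
            · exact h
            · exact absurd (show i ∈ D from Finset.mem_filter.mpr ⟨Finset.mem_univ _, h⟩) hd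
          rw [this, invStep_eq_zero, hcoe]
          exact hgF i hx hd
    rw [show invStep (hinvol.toPerm g) = l.get from funext hstep, hl]

end Stmt9

namespace Stmt9

open Finset

lemma count_zero_ofFn {n : ℕ} (π : Equiv.Perm (Fin n)) :
    (List.ofFn (invStep π)).count 0 = ((univ : Finset (Fin n)).filter fun i => π i = i).card := by
  rw [count_ofFn]
  congr 1
  apply Finset.filter_congr
  intro i _
  simpa using invStep_eq_zero (π := π) (i := i)

lemma partA (n k : ℕ) : invCount4321 n k = motzkinHCount n k := by
  unfold invCount4321 motzkinHCount
  apply Nat.card_eq_of_bijective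
    (f := fun x : {π : Equiv.Perm (Fin n) // Function.Involutive ⇑π ∧ Avoids4321 π ∧
        (Finset.univ.filter fun i : Fin n => π i = i).card = k} =>
      (⟨List.ofFn (invStep x.1),
        isMotzkin_ofFn_invStep x.2.1,
        by rw [List.length_ofFn],
        by rw [count_zero_ofFn]; exact x.2.2.2⟩ :
        {l : List ℤ // IsMotzkinPath l ∧ l.length = n ∧ l.count 0 = k}))
  constructor
  · rintro ⟨π₁, h1, ha1, hc1⟩ ⟨π₂, h2, ha2, hc2⟩ he
    have hl : List.ofFn (invStep π₁) = List.ofFn (invStep π₂) := congrArg Subtype.val he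
    exact Subtype.ext (eq_of_invStep_eq h1 h2 ha1 ha2 (List.ofFn_injective hl))
  · rintro ⟨l, hm, hlen, hcount⟩
    subst hlen
    obtain ⟨π, hinv, hav, hofn⟩ := exists_involution l hm
    refine ⟨⟨π, hinv, hav, ?_⟩, ?_⟩
    · rw [← count_zero_ofFn, hofn]; exact hcount
    · exact Subtype.ext hofn

end Stmt9

namespace Stmt9

open Finset

open scoped Classical in
noncomputable def allLists : ℕ → Finset (List ℤ)
  | 0 => {([] : List ℤ)}
  | n+1 => (({1, 0, -1} : Finset ℤ) ×ˢ allLists n).image fun p => p.1 :: p.2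

lemma mem_allLists : ∀ {n : ℕ} {l : List ℤ},
    l ∈ allLists n ↔ l.length = n ∧ ∀ s ∈ l, s = 1 ∨ s = 0 ∨ s = -1 := by
  intro n
  induction n with
  | zero =>
    intro l
    simp only [allLists, Finset.mem_singleton]
    constructor
    · rintro rfl; simp
    · rintro ⟨h, -⟩; exact List.length_eq_zero_iff.mp h
  | succ m ih =>
    intro l
    simp only [allLists, Finset.mem_image, Finset.mem_product]
    constructor
    · rintro ⟨⟨s, t⟩, ⟨hs, ht⟩, rfl⟩
      obtain ⟨hlen, hall⟩ := ih.mp ht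
      refine ⟨by simp [hlen], ?_⟩
      intro x hx
      rcases List.mem_cons.mp hx with rfl | hx
      · simpa using hs
      · exact hall x hx
    · rintro ⟨hlen, hall⟩
      cases l with
      | nil => simp at hlen
      | cons s t =>
        refine ⟨(s, t), ⟨?_, ih.mpr ⟨by simpa using hlen, fun x hx => hall x (List.mem_cons_of_mem _ hx)⟩⟩, rfl⟩
        have := hall s List.mem_cons_self
        simpa using this

open scoped Classical in
noncomputable def motzS (n k : ℕ) : Finset (List ℤ) :=
  (allLists n).filter fun l => IsMotzkinPath l ∧ l.count 0 = k

lemma mem_motzS {n k : ℕ} {l : List ℤ} :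
    l ∈ motzS n k ↔ IsMotzkinPath l ∧ l.length = n ∧ l.count 0 = k := by
  classical
  rw [motzS]
  simp only [Finset.mem_filter, mem_allLists]
  constructor
  · rintro ⟨⟨h1, _⟩, h2, h3⟩; exact ⟨h2, h1, h3⟩
  · rintro ⟨h1, h2, h3⟩; exact ⟨⟨h2, h1.1⟩, h1, h3⟩

lemma motzkinHCount_eq (n k : ℕ) : motzkinHCount n k = (motzS n k).card := by
  rw [← Nat.card_eq_finsetCard]
  unfold motzkinHCount
  exact Nat.card_congr (Equiv.subtypeEquivRight fun l => mem_motzS.symm)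

lemma motz_vanish {n k : ℕ} (h : n < k) : motzkinHCount n k = 0 := by
  rw [motzkinHCount_eq, Finset.card_eq_zero, Finset.eq_empty_iff_forall_notMem]
  intro l hl
  rw [mem_motzS] at hl
  have : l.count (0 : ℤ) ≤ l.length := List.count_le_length
  omega

lemma isMotzkin_nil : IsMotzkinPath ([] : List ℤ) := by
  refine ⟨by simp, by simp, ?_⟩
  intro p hp
  rw [List.prefix_nil.mp hp]
  simp

lemma isMotzkin_zero : IsMotzkinPath ([0] : List ℤ) := by
  refine ⟨by simp, by simp, ?_⟩
  intro p hp
  rcases List.prefix_cons_iff.mp hp with rfl | ⟨t, rfl, ht⟩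
  · simp
  · rw [List.prefix_nil.mp ht]; simp

lemma motz_zero (k : ℕ) : motzkinHCount 0 k = if k = 0 then 1 else 0 := by
  rw [motzkinHCount_eq]
  have : motzS 0 k = if k = 0 then {([] : List ℤ)} else ∅ := by
    ext l
    rw [mem_motzS]
    constructor
    · rintro ⟨hm, hlen, hc⟩
      have : l = [] := List.length_eq_zero_iff.mp hlen
      subst this
      simp at hc
      simp [← hc]
    · intro hl
      split_ifs at hl with h
      · rw [Finset.mem_singleton] at hl
        subst hl
        exact ⟨isMotzkin_nil, rfl, by simp [h]⟩
      · simp at hl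
  rw [this]
  split_ifs <;> simp

lemma motz_one (k : ℕ) : motzkinHCount 1 k = if k = 1 then 1 else 0 := by
  rw [motzkinHCount_eq]
  have : motzS 1 k = if k = 1 then {([0] : List ℤ)} else ∅ := by
    ext l
    rw [mem_motzS]
    constructor
    · rintro ⟨hm, hlen, hc⟩
      obtain ⟨a, rfl⟩ := List.length_eq_one_iff.mp hlen
      have ha : a = 0 := by
        have := hm.2.1
        simpa using this
      subst ha
      simp at hc
      simp [← hc]
    · intro hl
      split_ifs at hl with h
      · rw [Finset.mem_singleton] at hl
        subst hl
        exact ⟨isMotzkin_zero, rfl, by simp [h]⟩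
      · simp at hl
  rw [this]
  split_ifs <;> simp

end Stmt9

namespace Stmt9

open Finset

lemma take_sum_nonneg {p : List ℤ} (hm : IsMotzkinPath p) (t : ℕ) :
    0 ≤ (p.take t).sum := hm.2.2 _ (List.take_prefix t p)

lemma motzkin_glue {p q : List ℤ} (hp : IsMotzkinPath p) (hq : IsMotzkinPath q) :
    IsMotzkinPath (1 :: p ++ (-1) :: q) := by
  refine ⟨?_, ?_, ?_⟩
  · intro s hs
    rcases List.mem_cons.mp hs with rfl | hs
    · left; rfl
    · rcases List.mem_append.mp hs with h | h
      · exact hp.1 s h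
      · rcases List.mem_cons.mp h with rfl | h
        · right; right; rfl
        · exact hq.1 s h
  · rw [List.cons_append, List.sum_cons, List.sum_append, List.sum_cons, hp.2.1, hq.2.1]
    ring
  · intro r hr
    rw [List.prefix_iff_eq_take] at hr
    rw [hr]
    cases hlen : r.length with
    | zero => simp
    | succ s =>
      rw [List.cons_append, List.take_succ_cons, List.sum_cons,
        List.take_append, List.sum_append]
      have h1 : 0 ≤ (p.take s).sum := take_sum_nonneg hp s
      have h2 : -1 ≤ (((-1 : ℤ) :: q).take (s - p.length)).sum := by
        cases hd : s - p.length with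
        | zero => simp
        | succ m =>
          rw [List.take_succ_cons, List.sum_cons]
          have := take_sum_nonneg hq m
          linarith
      linarith

lemma glue_inj_aux {p p' q q' : List ℤ} (hp : IsMotzkinPath p) (hp' : IsMotzkinPath p')
    (h : p ++ (-1) :: q = p' ++ (-1) :: q') (hlt : p.length < p'.length) : False := by
  have ht := congrArg (List.take (p.length + 1)) h
  have e1 : (p ++ (-1) :: q).take (p.length + 1) = p ++ [(-1 : ℤ)] := by
    rw [List.take_append, List.take_of_length_le (by omega)]
    congr 1
    rw [show p.length + 1 - p.length = 1 by omega]
    rfl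
  have e2 : (p' ++ (-1) :: q').take (p.length + 1) = p'.take (p.length + 1) := by
    rw [List.take_append, show p.length + 1 - p'.length = 0 by omega]
    simp
  rw [e1, e2] at ht
  have h1 : (p ++ [(-1 : ℤ)]).sum = -1 := by
    rw [List.sum_append, hp.2.1]; simp
  have h2 := take_sum_nonneg hp' (p.length + 1)
  rw [← ht, h1] at h2
  linarith

lemma glue_inj {p p' q q' : List ℤ} (hp : IsMotzkinPath p) (hp' : IsMotzkinPath p')
    (h : p ++ (-1) :: q = p' ++ (-1) :: q') : p = p' ∧ q = q' := by
  have hlen : p.length = p'.length := by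
    rcases lt_trichotomy p.length p'.length with hl | hl | hl
    · exact (glue_inj_aux hp hp' h hl).elim
    · exact hl
    · exact (glue_inj_aux hp' hp h.symm hl).elim
  obtain ⟨h1, h2⟩ := List.append_inj h hlen
  refine ⟨h1, ?_⟩
  injection h2

lemma first_return {t : List ℤ} (hm : IsMotzkinPath (1 :: t)) :
    ∃ p q, t = p ++ (-1) :: q ∧ IsMotzkinPath p ∧ IsMotzkinPath q := by
  classical
  obtain ⟨hsteps, hsum, hpref⟩ := hm
  have hsum_t : t.sum = -1 := by rw [List.sum_cons] at hsum; linarith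
  have hex : ∃ m, (t.take m).sum = -1 :=
    ⟨t.length, by rw [List.take_of_length_le le_rfl]; exact hsum_t⟩
  set r := Nat.find hex with hr
  have hrspec : (t.take r).sum = -1 := Nat.find_spec hex
  have hmin : ∀ s < r, (t.take s).sum ≠ -1 := fun s hs => Nat.find_min hex hs
  have hrpos : r ≠ 0 := by
    intro h
    rw [h] at hrspec
    simp at hrspec
  have hprefix_ge : ∀ s, -1 ≤ (t.take s).sum := by
    intro s
    have hpre : (1 :: t.take s) <+: (1 :: t) :=
      List.cons_prefix_cons.mpr ⟨rfl, List.take_prefix s t⟩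
    have := hpref _ hpre
    rw [List.sum_cons] at this
    linarith
  have hnonneg : ∀ s, s < r → 0 ≤ (t.take s).sum := by
    intro s hs
    have h1 := hprefix_ge s
    have h2 := hmin s hs
    omega
  have hrlen : r ≤ t.length := by
    by_contra h
    push_neg at h
    exact hmin _ h (by rw [List.take_of_length_le le_rfl]; exact hsum_t)
  obtain ⟨rr, hrr⟩ : ∃ rr, r = rr + 1 := ⟨r - 1, by omega⟩
  rw [hrr] at hrspec hnonneg hrlen
  have hrr_lt : rr < t.length := by omega
  have hstep_sum := List.sum_take_succ t rr hrr_lt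
  have hs3 : t[rr] = 1 ∨ t[rr] = 0 ∨ t[rr] = -1 :=
    hsteps _ (List.mem_cons_of_mem _ (List.getElem_mem hrr_lt))
  have h0 : 0 ≤ (t.take rr).sum := hnonneg rr (by omega)
  have hget : t[rr] = -1 := by rcases hs3 with h | h | h <;> omega
  have htake0 : (t.take rr).sum = 0 := by omega
  refine ⟨t.take rr, t.drop (rr + 1), ?_, ?_, ?_⟩
  · conv_lhs => rw [← List.take_append_drop rr t]
    congr 1
    rw [List.drop_eq_getElem_cons hrr_lt, hget]
  · refine ⟨fun s hs => hsteps s (List.mem_cons_of_mem _ (List.take_subset rr t hs)),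
      htake0, ?_⟩
    intro pp hpp
    rw [List.prefix_iff_eq_take] at hpp
    rw [hpp, List.take_take]
    exact hnonneg _ (by have := Nat.min_le_right pp.length rr; omega)
  · refine ⟨fun s hs => hsteps s (List.mem_cons_of_mem _ (List.drop_subset (rr + 1) t hs)),
      ?_, ?_⟩
    · have hsplit := List.sum_take_add_sum_drop t (rr + 1)
      rw [hrspec, hsum_t] at hsplit
      linarith
    · intro pp hpp
      rw [List.prefix_iff_eq_take] at hpp
      rw [hpp]
      have e : t.take (rr + 1 + pp.length)
          = t.take (rr + 1) ++ (t.drop (rr + 1)).take pp.length := List.take_add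
      have h1 : -1 ≤ (t.take (rr + 1 + pp.length)).sum := hprefix_ge _
      rw [e, List.sum_append, hrspec] at h1
      linarith

end Stmt9

namespace Stmt9

open Finset

lemma motzkin_cons_zero {l : List ℤ} : IsMotzkinPath ((0 : ℤ) :: l) ↔ IsMotzkinPath l := by
  constructor
  · rintro ⟨hsteps, hsum, hpref⟩
    refine ⟨fun s hs => hsteps s (List.mem_cons_of_mem _ hs), ?_, ?_⟩
    · rw [List.sum_cons] at hsum; linarith
    · intro p hp
      have := hpref ((0 : ℤ) :: p) (List.cons_prefix_cons.mpr ⟨rfl, hp⟩)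
      rw [List.sum_cons] at this; linarith
  · rintro ⟨hsteps, hsum, hpref⟩
    refine ⟨?_, ?_, ?_⟩
    · intro s hs
      rcases List.mem_cons.mp hs with rfl | hs
      · right; left; rfl
      · exact hsteps s hs
    · rw [List.sum_cons, hsum]; ring
    · intro p hp
      rcases List.prefix_cons_iff.mp hp with rfl | ⟨t, rfl, ht⟩
      · simp
      · rw [List.sum_cons]
        have := hpref t ht
        linarith

lemma card_S0 (n k : ℕ) :
    ((motzS (n + 2) k).filter (fun l => l.head? = some 0)).card
      = if k = 0 then 0 else (motzS (n + 1) (k - 1)).card := by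
  classical
  cases k with
  | zero =>
    rw [if_pos rfl, Finset.card_eq_zero, Finset.eq_empty_iff_forall_notMem]
    intro l hl
    rw [Finset.mem_filter, mem_motzS] at hl
    obtain ⟨⟨hm, hlen, hc⟩, hhead⟩ := hl
    cases l with
    | nil => simp at hhead
    | cons s tl =>
      have hs : s = 0 := by simpa using hhead
      subst hs
      rw [List.count_cons] at hc
      simp at hc
  | succ m =>
    rw [if_neg (Nat.succ_ne_zero m)]
    symm
    apply Finset.card_bij (fun l _ => ((0 : ℤ) :: l))
    · intro l hl
      rw [mem_motzS] at hl
      rw [Finset.mem_filter, mem_motzS]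
      refine ⟨⟨motzkin_cons_zero.mpr hl.1, ?_, ?_⟩, rfl⟩
      · simp [hl.2.1]
      · rw [List.count_cons]
        simp [hl.2.2]
    · intro a _ b _ h
      injection h
    · intro l hl
      rw [Finset.mem_filter, mem_motzS] at hl
      obtain ⟨⟨hm, hlen, hc⟩, hhead⟩ := hl
      cases l with
      | nil => simp at hhead
      | cons s tl =>
        have hs : s = 0 := by simpa using hhead
        subst hs
        refine ⟨tl, ?_, rfl⟩
        rw [mem_motzS]
        refine ⟨motzkin_cons_zero.mp hm, by simpa using hlen, ?_⟩
        rw [List.count_cons] at hc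
        simp at hc
        omega

lemma card_S1 (n k : ℕ) :
    ((motzS (n + 2) k).filter (fun l => ¬ l.head? = some 0)).card
      = ∑ ij ∈ Finset.HasAntidiagonal.antidiagonal n, ∑ ab ∈ Finset.HasAntidiagonal.antidiagonal k,
          (motzS ij.1 ab.1).card * (motzS ij.2 ab.2).card := by
  classical
  have hbij : (((Finset.HasAntidiagonal.antidiagonal n ×ˢ Finset.HasAntidiagonal.antidiagonal k)).sigma
      (fun x => motzS x.1.1 x.2.1 ×ˢ motzS x.1.2 x.2.2)).card
      = ((motzS (n + 2) k).filter (fun l => ¬ l.head? = some 0)).card := by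
    apply Finset.card_bij (fun x _ => ((1 : ℤ) :: x.2.1 ++ (-1) :: x.2.2))
    · rintro ⟨⟨⟨i, j⟩, ⟨a, b⟩⟩, ⟨p, q⟩⟩ hx
      rw [Finset.mem_sigma, Finset.mem_product, Finset.mem_product] at hx
      obtain ⟨⟨hij, hab⟩, hp, hq⟩ := hx
      rw [Finset.HasAntidiagonal.mem_antidiagonal] at hij hab
      rw [mem_motzS] at hp hq
      rw [Finset.mem_filter, mem_motzS]
      dsimp only at *
      refine ⟨⟨motzkin_glue hp.1 hq.1, ?_, ?_⟩, by simp⟩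
      · have e1 := hp.2.1
        have e2 := hq.2.1
        simp only [List.cons_append, List.length_cons, List.length_append]
        omega
      · have e1 := hp.2.2
        have e2 := hq.2.2
        simp only [List.cons_append, List.count_cons, List.count_append]
        norm_num
        omega
    · rintro ⟨⟨⟨i₁, j₁⟩, ⟨a₁, b₁⟩⟩, ⟨p₁, q₁⟩⟩ hx₁ ⟨⟨⟨i₂, j₂⟩, ⟨a₂, b₂⟩⟩, ⟨p₂, q₂⟩⟩ hx₂ h
      rw [Finset.mem_sigma, Finset.mem_product, Finset.mem_product] at hx₁ hx₂
      obtain ⟨⟨hij₁, hab₁⟩, hp₁, hq₁⟩ := hx₁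
      obtain ⟨⟨hij₂, hab₂⟩, hp₂, hq₂⟩ := hx₂
      rw [mem_motzS] at hp₁ hq₁ hp₂ hq₂
      dsimp only at *
      have h' : p₁ ++ (-1 : ℤ) :: q₁ = p₂ ++ (-1 : ℤ) :: q₂ := by
        rw [List.cons_append, List.cons_append] at h
        injection h
      obtain ⟨hpe, hqe⟩ := glue_inj hp₁.1 hp₂.1 h'
      subst hpe; subst hqe
      have : i₁ = i₂ := by rw [← hp₁.2.1, ← hp₂.2.1]
      have : j₁ = j₂ := by rw [← hq₁.2.1, ← hq₂.2.1]
      have : a₁ = a₂ := by rw [← hp₁.2.2, ← hp₂.2.2]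
      have : b₁ = b₂ := by rw [← hq₁.2.2, ← hq₂.2.2]
      subst_vars
      rfl
    · intro l hl
      rw [Finset.mem_filter, mem_motzS] at hl
      obtain ⟨⟨hm, hlen, hc⟩, hhead⟩ := hl
      cases l with
      | nil => simp at hlen
      | cons s tl =>
        have hs0 : s ≠ 0 := by simpa using hhead
        have hs3 : s = 1 ∨ s = 0 ∨ s = -1 := hm.1 s List.mem_cons_self
        have hsneg : s ≠ -1 := by
          intro h
          have := hm.2.2 [s] ⟨tl, rfl⟩
          rw [h] at this
          simp at this
        have hs1 : s = 1 := by
          rcases hs3 with h | h | h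
          · exact h
          · exact absurd h hs0
          · exact absurd h hsneg
        subst hs1
        obtain ⟨p, q, rfl, hp, hq⟩ := first_return hm
        refine ⟨⟨⟨(p.length, q.length), (p.count 0, q.count 0)⟩, (p, q)⟩, ?_, rfl⟩
        rw [Finset.mem_sigma, Finset.mem_product, Finset.mem_product]
        refine ⟨⟨?_, ?_⟩, ?_, ?_⟩
        · rw [Finset.HasAntidiagonal.mem_antidiagonal]
          dsimp only
          simp only [List.length_cons, List.length_append] at hlen
          omega
        · rw [Finset.HasAntidiagonal.mem_antidiagonal]
          dsimp only
          rw [List.count_cons, List.count_append, List.count_cons] at hc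
          norm_num at hc
          omega
        · rw [mem_motzS]; exact ⟨hp, rfl, rfl⟩
        · rw [mem_motzS]; exact ⟨hq, rfl, rfl⟩
  rw [← hbij, Finset.card_sigma, Finset.sum_product]
  exact Finset.sum_congr rfl fun ij _ => Finset.sum_congr rfl fun ab _ =>
    Finset.card_product _ _

lemma motz_rec (n k : ℕ) :
    motzkinHCount (n + 2) k
      = (if k = 0 then 0 else motzkinHCount (n + 1) (k - 1))
        + ∑ ij ∈ Finset.HasAntidiagonal.antidiagonal n, ∑ ab ∈ Finset.HasAntidiagonal.antidiagonal k,
            motzkinHCount ij.1 ab.1 * motzkinHCount ij.2 ab.2 := by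
  classical
  simp only [motzkinHCount_eq]
  rw [← card_S0 n k, ← card_S1 n k]
  exact (Finset.card_filter_add_card_filter_not
    (p := fun l : List ℤ => l.head? = some 0)).symm

end Stmt9

namespace Stmt9

open Finset

noncomputable def P (n : ℕ) : Polynomial ℚ :=
  ∑ k ∈ Finset.range (n + 1), Polynomial.C ((motzkinHCount n k : ℚ)) * Polynomial.X ^ k

lemma coeff_P (n k : ℕ) : (P n).coeff k = (motzkinHCount n k : ℚ) := by
  rw [P, Polynomial.finset_sum_coeff]
  simp only [Polynomial.coeff_C_mul, Polynomial.coeff_X_pow, mul_ite, mul_one, mul_zero]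
  rw [Finset.sum_eq_single k (fun b _ hb => if_neg fun e => hb e.symm)
    (fun hk => by
      rw [if_pos rfl]
      rw [Finset.mem_range, not_lt] at hk
      norm_cast
      exact motz_vanish (by omega))]
  rw [if_pos rfl]

lemma P_zero : P 0 = 1 := by
  rw [P]
  simp [motz_zero]

lemma P_one : P 1 = Polynomial.X := by
  apply Polynomial.ext
  intro k
  rw [coeff_P, motz_one, Polynomial.coeff_X]
  rcases eq_or_ne k 1 with rfl | hk
  · simp
  · rw [if_neg hk, if_neg (fun e => hk e.symm)]
    simp

lemma P_rec (m : ℕ) : P (m + 2) = Polynomial.X * P (m + 1)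
    + ∑ ij ∈ Finset.HasAntidiagonal.antidiagonal m, P ij.1 * P ij.2 := by
  apply Polynomial.ext
  intro k
  rw [coeff_P, Polynomial.coeff_add, Polynomial.finset_sum_coeff]
  have hs : ∀ ij ∈ Finset.HasAntidiagonal.antidiagonal m, (P ij.1 * P ij.2).coeff k
      = ∑ ab ∈ Finset.HasAntidiagonal.antidiagonal k,
          ((motzkinHCount ij.1 ab.1 : ℚ) * (motzkinHCount ij.2 ab.2 : ℚ)) := by
    intro ij _
    rw [Polynomial.coeff_mul]
    exact Finset.sum_congr rfl fun ab _ => by rw [coeff_P, coeff_P]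
  rw [Finset.sum_congr rfl hs]
  have hx : (Polynomial.X * P (m + 1)).coeff k
      = if k = 0 then 0 else ((motzkinHCount (m + 1) (k - 1) : ℚ)) := by
    cases k with
    | zero => simp
    | succ j => rw [Polynomial.coeff_X_mul, coeff_P]; simp
  rw [hx, motz_rec m k]
  push_cast [apply_ite (fun x : ℕ => (x : ℚ))]
  ring

end Stmt9

/-- The two-variable generating function `f(x,y)` of 4321-avoiding involutions,
with `x` marking length and `y` fixed points, satisfies
`x² f² − (1 − xy) f + 1 = 0`, i.e. `f = (1 − xy − √(1 − 2xy + x²y² − 4x²))/(2x²)`;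
equivalently the number of 4321-avoiding involutions of length `n` with `k` fixed
points equals the number of Motzkin paths of length `n` with `k` horizontal steps. -/
theorem stmt9 :
    (∀ n k : ℕ, invCount4321 n k = motzkinHCount n k) ∧
    (∀ F : PowerSeries (Polynomial ℚ),
      (F = PowerSeries.mk fun n =>
        ∑ k ∈ Finset.range (n + 1),
          Polynomial.C ((invCount4321 n k : ℚ)) * Polynomial.X ^ k) →
      PowerSeries.X ^ 2 * F ^ 2
        - (1 - PowerSeries.C (R := Polynomial ℚ) Polynomial.X * PowerSeries.X) * F + 1
        = 0) := by
  constructor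
  · exact Stmt9.partA
  · intro F hF
    have hFP : F = PowerSeries.mk Stmt9.P := by
      rw [hF]
      congr 1
      funext n
      simp only [Stmt9.partA]
      rfl
    rw [hFP]
    apply PowerSeries.ext
    intro n
    rw [map_zero, map_add, map_sub, sub_mul, one_mul, map_sub, PowerSeries.coeff_one,
      pow_two (PowerSeries.mk Stmt9.P), PowerSeries.coeff_X_pow_mul',
      PowerSeries.coeff_mk, mul_assoc, PowerSeries.coeff_C_mul]
    cases n with
    | zero =>
      rw [PowerSeries.coeff_zero_X_mul]
      norm_num [Stmt9.P_zero]
    | succ m =>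
      rw [PowerSeries.coeff_succ_X_mul, PowerSeries.coeff_mk]
      cases m with
      | zero =>
        rw [Stmt9.P_one, Stmt9.P_zero]
        norm_num
      | succ j =>
        rw [if_pos (by omega : 2 ≤ j + 1 + 1), PowerSeries.coeff_mul]
        simp only [PowerSeries.coeff_mk]
        rw [show j + 1 + 1 - 2 = j from rfl]
        rw [show j + 1 + 1 = j + 2 from rfl, Stmt9.P_rec j]
        norm_num
end

section
/- The number of involutions of length n avoiding both 4321 and 312 satisfies the Tribonacci recurrence: if a_n denotes this count, then a_n = a_{n−1} + a_{n−2} + a_{n−3} for n ≥ 4, with generating function f(x) = (x + x² + x³)/(1 − x − x² − x³), giving the sequence 1, 2, 4, 7, 13, 24, 44, 81, …. -/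
set_option maxHeartbeats 1000000


open Equiv Finset

/-- Number of involutions of length `n` avoiding 4321 and 312. -/
noncomputable def count4321x312 (n : ℕ) : ℕ :=
  Nat.card {π : Equiv.Perm (Fin n) // Function.Involutive ⇑π ∧ Avoids4321 π ∧
    Avoids312 π}


namespace Stmt13Aux

abbrev GoodT (n : ℕ) :=
  {π : Equiv.Perm (Fin n) // Function.Involutive ⇑π ∧ Avoids4321 π ∧ Avoids312 π}

lemma count_eq (n : ℕ) : count4321x312 n = Nat.card (GoodT n) := rfl

instance decGood (n : ℕ) : DecidablePred fun π : Equiv.Perm (Fin n) =>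
    Function.Involutive ⇑π ∧ Avoids4321 π ∧ Avoids312 π := fun π => by
  unfold Function.Involutive Avoids4321 Avoids312
  infer_instance

lemma count0 : count4321x312 0 = 1 := by
  rw [count_eq, Nat.card_eq_fintype_card]; decide

lemma count1 : count4321x312 1 = 1 := by
  rw [count_eq, Nat.card_eq_fintype_card]; decide

lemma count2 : count4321x312 2 = 2 := by
  rw [count_eq, Nat.card_eq_fintype_card]; decide

/-! ### head-block extension -/

def headFun (m n : ℕ) (τ : Equiv.Perm (Fin n)) (i : Fin (m + n)) : Fin (m + n) :=
  if h : i.val < m then ⟨m - 1 - i.val, by omega⟩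
  else Fin.natAdd m (τ ⟨i.val - m, by omega⟩)

lemma headFun_pos {m n : ℕ} (τ : Equiv.Perm (Fin n)) {i : Fin (m + n)} (h : i.val < m) :
    headFun m n τ i = ⟨m - 1 - i.val, by omega⟩ := dif_pos h

lemma headFun_neg {m n : ℕ} (τ : Equiv.Perm (Fin n)) {i : Fin (m + n)} (h : ¬ i.val < m) :
    headFun m n τ i = Fin.natAdd m (τ ⟨i.val - m, by omega⟩) := dif_neg h

lemma headFun_invol (m n : ℕ) (τ : Equiv.Perm (Fin n)) (hτ : Function.Involutive ⇑τ) :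
    Function.Involutive (headFun m n τ) := by
  intro i
  by_cases h : i.val < m
  · rw [headFun_pos τ h,
      headFun_pos τ (show ((⟨m - 1 - i.val, by omega⟩ : Fin (m+n))).val < m by simp; omega)]
    exact Fin.ext (by simp; omega)
  · rw [headFun_neg τ h]
    have hv : (Fin.natAdd m (τ ⟨i.val - m, by omega⟩)).val
        = m + (τ ⟨i.val - m, by omega⟩).val := rfl
    rw [headFun_neg τ (by omega)]
    apply Fin.ext
    have h2 : (⟨(Fin.natAdd m (τ ⟨i.val - m, by omega⟩)).val - m, by omega⟩ : Fin n)
        = τ ⟨i.val - m, by omega⟩ := Fin.ext (by simp [Fin.natAdd])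
    rw [h2, hτ]
    show m + (i.val - m) = i.val
    omega

def headPerm (m n : ℕ) (τ : Equiv.Perm (Fin n)) (hτ : Function.Involutive ⇑τ) :
    Equiv.Perm (Fin (m + n)) := (headFun_invol m n τ hτ).toPerm

lemma headPerm_invol (m n : ℕ) (τ : Equiv.Perm (Fin n)) (hτ : Function.Involutive ⇑τ) :
    Function.Involutive ⇑(headPerm m n τ hτ) := by
  rw [headPerm, Function.Involutive.coe_toPerm]; exact headFun_invol m n τ hτ

lemma headPerm_lt {m n : ℕ} {τ : Equiv.Perm (Fin n)} {hτ : Function.Involutive ⇑τ}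
    {i : Fin (m + n)} (h : i.val < m) : (headPerm m n τ hτ i).val = m - 1 - i.val := by
  rw [headPerm, Function.Involutive.coe_toPerm, headFun_pos τ h]

lemma headPerm_ge {m n : ℕ} {τ : Equiv.Perm (Fin n)} {hτ : Function.Involutive ⇑τ}
    {i : Fin (m + n)} (j : Fin n) (hij : i.val = m + j.val) :
    (headPerm m n τ hτ i).val = m + (τ j).val := by
  rw [headPerm, Function.Involutive.coe_toPerm, headFun_neg τ (by omega)]
  have : (⟨i.val - m, by omega⟩ : Fin n) = j := Fin.ext (by simp; omega)
  rw [this]; rfl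

lemma headPerm_avoids312 {m n : ℕ} {τ : Equiv.Perm (Fin n)} (hτ : Function.Involutive ⇑τ)
    (h3 : Avoids312 τ) : Avoids312 (headPerm m n τ hτ) := by
  rintro ⟨a, b, c, hab, hbc, h1, h2⟩
  have hab' : a.val < b.val := hab
  have hbc' : b.val < c.val := hbc
  have h1v : (headPerm m n τ hτ b).val < (headPerm m n τ hτ c).val := h1
  have h2v : (headPerm m n τ hτ c).val < (headPerm m n τ hτ a).val := h2
  by_cases hc : c.val < m
  · have va := headPerm_lt (τ := τ) (hτ := hτ) (i := a) (by omega)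
    have vb := headPerm_lt (τ := τ) (hτ := hτ) (i := b) (by omega)
    have vc := headPerm_lt (τ := τ) (hτ := hτ) (i := c) hc
    omega
  · have vc := headPerm_ge (τ := τ) (hτ := hτ) (i := c) ⟨c.val - m, by omega⟩ (by simp; omega)
    have ha : ¬ a.val < m := by
      intro hna
      have va := headPerm_lt (τ := τ) (hτ := hτ) (i := a) hna
      omega
    have va := headPerm_ge (τ := τ) (hτ := hτ) (i := a) ⟨a.val - m, by omega⟩ (by simp; omega)
    have vb := headPerm_ge (τ := τ) (hτ := hτ) (i := b) ⟨b.val - m, by omega⟩ (by simp; omega)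
    exact h3 ⟨⟨a.val - m, by omega⟩, ⟨b.val - m, by omega⟩, ⟨c.val - m, by omega⟩,
      by show a.val - m < b.val - m; omega,
      by show b.val - m < c.val - m; omega,
      by show (τ _).val < (τ _).val; omega,
      by show (τ _).val < (τ _).val; omega⟩

lemma headPerm_avoids4321 {m n : ℕ} (hm : m ≤ 3) {τ : Equiv.Perm (Fin n)}
    (hτ : Function.Involutive ⇑τ) (h4 : Avoids4321 τ) : Avoids4321 (headPerm m n τ hτ) := by
  rintro ⟨a, b, c, d, hab, hbc, hcd, h1, h2, h3⟩
  have hab' : a.val < b.val := hab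
  have hbc' : b.val < c.val := hbc
  have hcd' : c.val < d.val := hcd
  have h1v : (headPerm m n τ hτ d).val < (headPerm m n τ hτ c).val := h1
  have h2v : (headPerm m n τ hτ c).val < (headPerm m n τ hτ b).val := h2
  have h3v : (headPerm m n τ hτ b).val < (headPerm m n τ hτ a).val := h3
  by_cases ha : a.val < m
  · have va := headPerm_lt (τ := τ) (hτ := hτ) (i := a) ha
    omega
  · have va := headPerm_ge (τ := τ) (hτ := hτ) (i := a) ⟨a.val - m, by omega⟩ (by simp; omega)
    have vb := headPerm_ge (τ := τ) (hτ := hτ) (i := b) ⟨b.val - m, by omega⟩ (by simp; omega)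
    have vc := headPerm_ge (τ := τ) (hτ := hτ) (i := c) ⟨c.val - m, by omega⟩ (by simp; omega)
    have vd := headPerm_ge (τ := τ) (hτ := hτ) (i := d) ⟨d.val - m, by omega⟩ (by simp; omega)
    exact h4 ⟨⟨a.val - m, by omega⟩, ⟨b.val - m, by omega⟩, ⟨c.val - m, by omega⟩,
      ⟨d.val - m, by omega⟩,
      by show a.val - m < b.val - m; omega,
      by show b.val - m < c.val - m; omega,
      by show c.val - m < d.val - m; omega,
      by show (τ _).val < (τ _).val; omega,
      by show (τ _).val < (τ _).val; omega,
      by show (τ _).val < (τ _).val; omega⟩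

/-! ### structure of good permutations -/

lemma block_lt {N : ℕ} {π : Equiv.Perm (Fin N)} (hinv : Function.Involutive ⇑π)
    (h3 : Avoids312 π) (hN : 0 < N) (j : Fin N) (h0 : 0 < j.val)
    (hj : j.val < (π ⟨0, hN⟩).val) : (π j).val < (π ⟨0, hN⟩).val := by
  have hKz : π (π ⟨0, hN⟩) = ⟨0, hN⟩ := hinv _
  have hne : (π j).val ≠ (π ⟨0, hN⟩).val := by
    intro h
    have h2 : j = (⟨0, hN⟩ : Fin N) := π.injective (Fin.ext h)
    have := congrArg Fin.val h2
    simp at this; omega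
  by_contra hge
  push_neg at hge
  apply h3
  refine ⟨⟨0, hN⟩, π ⟨0, hN⟩, π j, ?_, ?_, ?_, ?_⟩
  · show (0:ℕ) < (π ⟨0, hN⟩).val; omega
  · show (π ⟨0, hN⟩).val < (π j).val; omega
  · show (π (π ⟨0, hN⟩)).val < (π (π j)).val
    rw [hKz, hinv j]; show (0:ℕ) < j.val; omega
  · show (π (π j)).val < (π ⟨0, hN⟩).val
    rw [hinv j]; omega

lemma k_le_2 {N : ℕ} {π : Equiv.Perm (Fin N)} (hinv : Function.Involutive ⇑π)
    (h4 : Avoids4321 π) (h3 : Avoids312 π) (hN : 0 < N) : (π ⟨0, hN⟩).val ≤ 2 := by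
  by_contra hk
  push_neg at hk
  have hKlt : (π ⟨0, hN⟩).val < N := (π ⟨0, hN⟩).isLt
  have hN4 : 3 < N := by omega
  have h1N : 1 < N := by omega
  have h2N : 2 < N := by omega
  have v1 := block_lt hinv h3 hN ⟨1, h1N⟩ (by simp) (by simp; omega)
  have v2 := block_lt hinv h3 hN ⟨2, h2N⟩ (by simp) (by simp; omega)
  have hKz : π (π ⟨0, hN⟩) = ⟨0, hN⟩ := hinv _
  have hne : (π ⟨1, h1N⟩).val ≠ (π ⟨2, h2N⟩).val := by
    intro h
    have h2 := π.injective (Fin.ext h : π ⟨1, h1N⟩ = π ⟨2, h2N⟩)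
    have := congrArg Fin.val h2
    simp at this
  have h2ne0 : (π ⟨2, h2N⟩).val ≠ 0 := by
    intro h
    have he : π (⟨2, h2N⟩ : Fin N) = ⟨0, hN⟩ := Fin.ext (by simpa using h)
    have : (⟨2, h2N⟩ : Fin N) = π ⟨0, hN⟩ := by rw [← he, hinv]
    have := congrArg Fin.val this
    simp at this; omega
  rcases lt_or_gt_of_ne hne with hlt | hgt
  · exact h3 ⟨⟨0, hN⟩, ⟨1, h1N⟩, ⟨2, h2N⟩,
      by show (0:ℕ) < 1; omega, by show (1:ℕ) < 2; omega, hlt,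
      by show (π ⟨2, h2N⟩).val < (π ⟨0, hN⟩).val; omega⟩
  · exact h4 ⟨⟨0, hN⟩, ⟨1, h1N⟩, ⟨2, h2N⟩, π ⟨0, hN⟩,
      by show (0:ℕ) < 1; omega, by show (1:ℕ) < 2; omega,
      by show (2:ℕ) < (π ⟨0, hN⟩).val; omega,
      by show (π (π ⟨0, hN⟩)).val < (π ⟨2, h2N⟩).val; rw [hKz]; show (0:ℕ) < _; omega,
      hgt,
      by show (π ⟨1, h1N⟩).val < (π ⟨0, hN⟩).val; omega⟩

lemma head_vals {N : ℕ} {π : Equiv.Perm (Fin N)} (hinv : Function.Involutive ⇑π)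
    (h4 : Avoids4321 π) (h3 : Avoids312 π) (hN : 0 < N) (i : Fin N)
    (hi : i.val ≤ (π ⟨0, hN⟩).val) : (π i).val = (π ⟨0, hN⟩).val - i.val := by
  have hk2 := k_le_2 hinv h4 h3 hN
  have hKz : π (π ⟨0, hN⟩) = ⟨0, hN⟩ := hinv _
  by_cases h0 : i.val = 0
  · have hiz : i = ⟨0, hN⟩ := Fin.ext h0
    rw [hiz]; omega
  · by_cases hk : i.val = (π ⟨0, hN⟩).val
    · have hiz : i = π ⟨0, hN⟩ := Fin.ext hk
      rw [hiz, hKz]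
      show (0:ℕ) = _ - _
      omega
    · have hblk := block_lt hinv h3 hN i (by omega) (by omega)
      have hne0 : (π i).val ≠ 0 := by
        intro h
        have he : π i = ⟨0, hN⟩ := Fin.ext (by simpa using h)
        have : i = π ⟨0, hN⟩ := by rw [← he, hinv]
        have := congrArg Fin.val this
        omega
      omega

lemma tail_ge {N : ℕ} {π : Equiv.Perm (Fin N)} (hinv : Function.Involutive ⇑π)
    (h4 : Avoids4321 π) (h3 : Avoids312 π) (hN : 0 < N) (i : Fin N)
    (hi : (π ⟨0, hN⟩).val < i.val) : (π ⟨0, hN⟩).val < (π i).val := by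
  by_contra hle
  push_neg at hle
  have hv := head_vals hinv h4 h3 hN (π i) hle
  rw [hinv i] at hv
  omega

/-! ### decomposition -/

lemma decomp (m t : ℕ) (hm1 : 1 ≤ m) (π : Equiv.Perm (Fin (m + t)))
    (hinv : Function.Involutive ⇑π) (h4 : Avoids4321 π) (h3 : Avoids312 π)
    (hk : (π ⟨0, by omega⟩).val = m - 1) :
    ∃ (τ : Equiv.Perm (Fin t)) (hτ : Function.Involutive ⇑τ),
      Avoids4321 τ ∧ Avoids312 τ ∧ headPerm m t τ hτ = π := by
  have hN : 0 < m + t := by omega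
  have htail : ∀ i : Fin (m + t), m ≤ i.val → m ≤ (π i).val := by
    intro i hi
    have := tail_ge hinv h4 h3 hN i (by omega)
    omega
  set f : Fin t → Fin t := fun j =>
    ⟨(π (Fin.natAdd m j)).val - m, by
      have := (π (Fin.natAdd m j)).isLt; have := j.isLt; omega⟩ with hf
  have hfval : ∀ j : Fin t, (f j).val = (π (Fin.natAdd m j)).val - m := fun j => rfl
  have hge : ∀ j : Fin t, m ≤ (π (Fin.natAdd m j)).val := by
    intro j
    exact htail _ (by simp)
  have hnat : ∀ j : Fin t, (Fin.natAdd m j).val = m + j.val := fun j => rfl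
  have hpival : ∀ j : Fin t, (π (Fin.natAdd m j)).val = m + (f j).val := by
    intro j
    have := hge j
    rw [hfval]
    omega
  have hfinv : Function.Involutive f := by
    intro j
    have e1 : Fin.natAdd m (f j) = π (Fin.natAdd m j) := by
      apply Fin.ext
      rw [hnat, hfval]
      have := hge j
      omega
    apply Fin.ext
    calc (f (f j)).val = (π (Fin.natAdd m (f j))).val - m := hfval _
      _ = (π (π (Fin.natAdd m j))).val - m := by rw [e1]
      _ = (Fin.natAdd m j).val - m := by rw [hinv]
      _ = j.val := by rw [hnat]; omega
  have hcoe : ⇑(Function.Involutive.toPerm f hfinv) = f := Function.Involutive.coe_toPerm hfinv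
  refine ⟨Function.Involutive.toPerm f hfinv, by rw [hcoe]; exact hfinv, ?_, ?_, ?_⟩
  · rintro ⟨a, b, c, d, hab, hbc, hcd, h1, h2, h3'⟩
    rw [hcoe] at h1 h2 h3'
    have h1v : (f d).val < (f c).val := h1
    have h2v : (f c).val < (f b).val := h2
    have h3v : (f b).val < (f a).val := h3'
    have hab' : a.val < b.val := hab
    have hbc' : b.val < c.val := hbc
    have hcd' : c.val < d.val := hcd
    apply h4
    refine ⟨Fin.natAdd m a, Fin.natAdd m b, Fin.natAdd m c, Fin.natAdd m d, ?_, ?_, ?_, ?_, ?_, ?_⟩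
    · show (Fin.natAdd m a).val < (Fin.natAdd m b).val; rw [hnat, hnat]; omega
    · show (Fin.natAdd m b).val < (Fin.natAdd m c).val; rw [hnat, hnat]; omega
    · show (Fin.natAdd m c).val < (Fin.natAdd m d).val; rw [hnat, hnat]; omega
    · show (π _).val < (π _).val; rw [hpival, hpival]; omega
    · show (π _).val < (π _).val; rw [hpival, hpival]; omega
    · show (π _).val < (π _).val; rw [hpival, hpival]; omega
  · rintro ⟨a, b, c, hab, hbc, h1, h2⟩
    rw [hcoe] at h1 h2
    have h1v : (f b).val < (f c).val := h1
    have h2v : (f c).val < (f a).val := h2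
    have hab' : a.val < b.val := hab
    have hbc' : b.val < c.val := hbc
    apply h3
    refine ⟨Fin.natAdd m a, Fin.natAdd m b, Fin.natAdd m c, ?_, ?_, ?_, ?_⟩
    · show (Fin.natAdd m a).val < (Fin.natAdd m b).val; rw [hnat, hnat]; omega
    · show (Fin.natAdd m b).val < (Fin.natAdd m c).val; rw [hnat, hnat]; omega
    · show (π _).val < (π _).val; rw [hpival, hpival]; omega
    · show (π _).val < (π _).val; rw [hpival, hpival]; omega
  · apply Equiv.ext
    intro i
    apply Fin.ext
    by_cases hi : i.val < m
    · rw [headPerm_lt hi]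
      have hv := head_vals hinv h4 h3 hN i (by omega)
      omega
    · set j : Fin t := ⟨i.val - m, by omega⟩ with hj
      have hji : Fin.natAdd m j = i := by
        apply Fin.ext; rw [hnat, hj]; simp; omega
      rw [headPerm_ge j (by rw [hj]; simp; omega), hcoe]
      rw [← hji, hpival]

/-! ### the bijection -/

def castGood {a b : ℕ} (h : a = b) (x : GoodT a) : GoodT b := h ▸ x

lemma castGood_val {a b : ℕ} (h : a = b) (x : GoodT a) (i : Fin a) :
    ((castGood h x).1 (Fin.cast h i)).val = (x.1 i).val := by subst h; rfl

lemma castGood_castGood {a b : ℕ} (h : a = b) (x : GoodT a) :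
    castGood h.symm (castGood h x) = x := by subst h; rfl

lemma castGood_inj {a b : ℕ} (h : a = b) : Function.Injective (castGood h) := by
  subst h; exact fun x y hxy => hxy

def embGood (m : ℕ) (hm : m ≤ 3) {n : ℕ} (τ : GoodT n) : GoodT (m + n) :=
  ⟨headPerm m n τ.1 τ.2.1, headPerm_invol m n τ.1 τ.2.1,
    headPerm_avoids4321 hm τ.2.1 τ.2.2.1, headPerm_avoids312 τ.2.1 τ.2.2.2⟩

lemma embGood_zero (m : ℕ) (hm : m ≤ 3) (hm1 : 1 ≤ m) {n : ℕ} (τ : GoodT n) :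
    ((embGood m hm τ).1 ⟨0, by omega⟩).val = m - 1 := by
  have := headPerm_lt (τ := τ.1) (hτ := τ.2.1) (i := (⟨0, by omega⟩ : Fin (m + n)))
    (show (0:ℕ) < m by omega)
  exact this.trans (by simp)

lemma embGood_inj (m : ℕ) (hm : m ≤ 3) {n : ℕ} :
    Function.Injective (embGood m hm (n := n)) := by
  intro x y hxy
  apply Subtype.ext
  apply Equiv.ext
  intro j
  apply Fin.ext
  have := congrArg (fun z : GoodT (m + n) => (z.1 (Fin.natAdd m j)).val) hxy
  simp only [embGood] at this
  rw [headPerm_ge j rfl, headPerm_ge j rfl] at this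
  omega

end Stmt13Aux
namespace Stmt13Aux

variable {n : ℕ}

def F (n : ℕ) : GoodT (2 + n) ⊕ GoodT (1 + n) ⊕ GoodT n → GoodT (3 + n)
  | Sum.inl τ => castGood (by omega : 1 + (2 + n) = 3 + n) (embGood 1 (by omega) τ)
  | Sum.inr (Sum.inl τ) => castGood (by omega : 2 + (1 + n) = 3 + n) (embGood 2 (by omega) τ)
  | Sum.inr (Sum.inr τ) => embGood 3 (by omega) τ

lemma F_zero (n : ℕ) (x : GoodT (2 + n) ⊕ GoodT (1 + n) ⊕ GoodT n) :
    ((F n x).1 ⟨0, by omega⟩).val =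
      (match x with
        | Sum.inl _ => 0
        | Sum.inr (Sum.inl _) => 1
        | Sum.inr (Sum.inr _) => 2) := by
  match x with
  | Sum.inl τ =>
    show ((castGood _ (embGood 1 (by omega) τ)).1 ⟨0, by omega⟩).val = 0
    have h : (⟨0, by omega⟩ : Fin (3 + n))
        = Fin.cast (by omega : 1 + (2 + n) = 3 + n) ⟨0, by omega⟩ := Fin.ext rfl
    rw [h, castGood_val]
    have := embGood_zero 1 (by omega) (by omega) (n := 2 + n) τ
    omega
  | Sum.inr (Sum.inl τ) =>
    show ((castGood _ (embGood 2 (by omega) τ)).1 ⟨0, by omega⟩).val = 1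
    have h : (⟨0, by omega⟩ : Fin (3 + n))
        = Fin.cast (by omega : 2 + (1 + n) = 3 + n) ⟨0, by omega⟩ := Fin.ext rfl
    rw [h, castGood_val]
    have := embGood_zero 2 (by omega) (by omega) (n := 1 + n) τ
    omega
  | Sum.inr (Sum.inr τ) =>
    have := embGood_zero 3 (by omega) (by omega) (n := n) τ
    exact this

lemma F_inj (n : ℕ) : Function.Injective (F n) := by
  intro x y hxy
  have hz := congrArg (fun z : GoodT (3 + n) => (z.1 ⟨0, by omega⟩).val) hxy
  change ((F n x).1 ⟨0, by omega⟩).val = ((F n y).1 ⟨0, by omega⟩).val at hz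
  rw [F_zero n x, F_zero n y] at hz
  match x, y with
  | Sum.inl τ, Sum.inl σ =>
    exact congrArg Sum.inl (embGood_inj 1 (by omega) (castGood_inj _ hxy))
  | Sum.inr (Sum.inl τ), Sum.inr (Sum.inl σ) =>
    exact congrArg (Sum.inr ∘ Sum.inl) (embGood_inj 2 (by omega) (castGood_inj _ hxy))
  | Sum.inr (Sum.inr τ), Sum.inr (Sum.inr σ) =>
    exact congrArg (Sum.inr ∘ Sum.inr) (embGood_inj 3 (by omega) hxy)
  | Sum.inl τ, Sum.inr (Sum.inl σ) => simp at hz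
  | Sum.inl τ, Sum.inr (Sum.inr σ) => simp at hz
  | Sum.inr (Sum.inl τ), Sum.inl σ => simp at hz
  | Sum.inr (Sum.inl τ), Sum.inr (Sum.inr σ) => simp at hz
  | Sum.inr (Sum.inr τ), Sum.inl σ => simp at hz
  | Sum.inr (Sum.inr τ), Sum.inr (Sum.inl σ) => simp at hz

lemma F_surj (n : ℕ) : Function.Surjective (F n) := by
  rintro ⟨π, hπ⟩
  have hN : 0 < 3 + n := by omega
  have hk2 := k_le_2 hπ.1 hπ.2.1 hπ.2.2 hN
  have hcases : (π ⟨0, hN⟩).val = 0 ∨ (π ⟨0, hN⟩).val = 1 ∨ (π ⟨0, hN⟩).val = 2 := by omega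
  rcases hcases with hk | hk | hk
  · -- m = 1
    have h : 1 + (2 + n) = 3 + n := by omega
    set y : GoodT (1 + (2 + n)) := castGood h.symm ⟨π, hπ⟩ with hy
    have hy0 : (y.1 ⟨0, by omega⟩).val = 0 := by
      have hc : (⟨0, by omega⟩ : Fin (1 + (2 + n)))
          = Fin.cast h.symm ⟨0, hN⟩ := Fin.ext rfl
      rw [hy, hc, castGood_val]
      exact hk
    obtain ⟨τ, hτ, h4τ, h3τ, heq⟩ := decomp 1 (2 + n) (by omega) y.1 y.2.1 y.2.2.1 y.2.2.2 hy0
    refine ⟨Sum.inl ⟨τ, hτ, h4τ, h3τ⟩, ?_⟩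
    show castGood h (embGood 1 (by omega) ⟨τ, hτ, h4τ, h3τ⟩) = ⟨π, hπ⟩
    have he : embGood 1 (by omega) ⟨τ, hτ, h4τ, h3τ⟩ = y := Subtype.ext heq
    rw [he, hy, castGood_castGood]
  · -- m = 2
    have h : 2 + (1 + n) = 3 + n := by omega
    set y : GoodT (2 + (1 + n)) := castGood h.symm ⟨π, hπ⟩ with hy
    have hy0 : (y.1 ⟨0, by omega⟩).val = 1 := by
      have hc : (⟨0, by omega⟩ : Fin (2 + (1 + n)))
          = Fin.cast h.symm ⟨0, hN⟩ := Fin.ext rfl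
      rw [hy, hc, castGood_val]
      exact hk
    obtain ⟨τ, hτ, h4τ, h3τ, heq⟩ := decomp 2 (1 + n) (by omega) y.1 y.2.1 y.2.2.1 y.2.2.2 hy0
    refine ⟨Sum.inr (Sum.inl ⟨τ, hτ, h4τ, h3τ⟩), ?_⟩
    show castGood h (embGood 2 (by omega) ⟨τ, hτ, h4τ, h3τ⟩) = ⟨π, hπ⟩
    have he : embGood 2 (by omega) ⟨τ, hτ, h4τ, h3τ⟩ = y := Subtype.ext heq
    rw [he, hy, castGood_castGood]
  · -- m = 3
    obtain ⟨τ, hτ, h4τ, h3τ, heq⟩ := decomp 3 n (by omega) π hπ.1 hπ.2.1 hπ.2.2 hk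
    exact ⟨Sum.inr (Sum.inr ⟨τ, hτ, h4τ, h3τ⟩), Subtype.ext heq⟩

lemma rec3 (n : ℕ) :
    count4321x312 (3 + n) = count4321x312 (2 + n) + count4321x312 (1 + n) + count4321x312 n := by
  have e : (GoodT (2 + n) ⊕ GoodT (1 + n) ⊕ GoodT n) ≃ GoodT (3 + n) :=
    Equiv.ofBijective (F n) ⟨F_inj n, F_surj n⟩
  rw [count_eq, count_eq, count_eq, count_eq, ← Nat.card_congr e, Nat.card_sum, Nat.card_sum]
  omega

lemma count3 : count4321x312 3 = 4 := by
  have := rec3 0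
  rw [count0, count1, count2] at this
  simpa using this

lemma count_rec {n : ℕ} (hn : 4 ≤ n) :
    count4321x312 n = count4321x312 (n - 1) + count4321x312 (n - 2) + count4321x312 (n - 3) := by
  have h3 : n = 3 + (n - 3) := by omega
  have h1 : n - 1 = 2 + (n - 3) := by omega
  have h2 : n - 2 = 1 + (n - 3) := by omega
  rw [h1, h2, show n - 3 = n - 3 from rfl]
  calc count4321x312 n = count4321x312 (3 + (n - 3)) := by rw [← h3]
    _ = _ := rec3 (n - 3)

end Stmt13Aux
open PowerSeries in
lemma coeff_X_pow_mul' (k n : ℕ) (f : PowerSeries ℚ) :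
    (PowerSeries.coeff n) ((PowerSeries.X : ℚ⟦X⟧) ^ k * f)
      = if k ≤ n then (PowerSeries.coeff (n - k)) f else 0 := by
  split_ifs with h
  · conv_lhs => rw [show n = (n - k) + k by omega]
    rw [PowerSeries.coeff_X_pow_mul]
  · rw [PowerSeries.coeff_mul]
    apply Finset.sum_eq_zero
    rintro ⟨i, j⟩ hij
    rw [Finset.HasAntidiagonal.mem_antidiagonal] at hij
    rw [PowerSeries.coeff_X_pow, if_neg (by omega), zero_mul]

/-- The involutions avoiding 4321 and 312 are counted by the Tribonacci-like
sequence `1, 2, 4, 7, 13, 24, 44, 81, …`, with generating function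
`(x + x² + x³)/(1 − x − x² − x³)`. -/
theorem stmt13 :
    count4321x312 1 = 1 ∧ count4321x312 2 = 2 ∧ count4321x312 3 = 4 ∧
    (∀ n : ℕ, 4 ≤ n →
      count4321x312 n
        = count4321x312 (n - 1) + count4321x312 (n - 2) + count4321x312 (n - 3)) ∧
    (1 - PowerSeries.X - PowerSeries.X ^ 2 - PowerSeries.X ^ 3) *
        (PowerSeries.mk fun n => if n = 0 then (0 : ℚ) else (count4321x312 n : ℚ))
      = PowerSeries.X + PowerSeries.X ^ 2 + PowerSeries.X ^ 3 := by
  refine ⟨Stmt13Aux.count1, Stmt13Aux.count2, Stmt13Aux.count3,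
    fun n hn => Stmt13Aux.count_rec hn, ?_⟩
  set g : ℕ → ℚ := fun n => if n = 0 then (0 : ℚ) else (count4321x312 n : ℚ) with hg
  apply PowerSeries.ext
  intro n
  have hL : (1 - PowerSeries.X - PowerSeries.X ^ 2 - PowerSeries.X ^ 3) * PowerSeries.mk g
      = PowerSeries.mk g - PowerSeries.X ^ 1 * PowerSeries.mk g
        - PowerSeries.X ^ 2 * PowerSeries.mk g - PowerSeries.X ^ 3 * PowerSeries.mk g := by
    ring
  rw [hL, map_sub, map_sub, map_sub, coeff_X_pow_mul', coeff_X_pow_mul', coeff_X_pow_mul',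
    map_add, map_add, PowerSeries.coeff_X, PowerSeries.coeff_X_pow, PowerSeries.coeff_X_pow]
  simp only [PowerSeries.coeff_mk]
  match n with
  | 0 => norm_num [hg]
  | 1 => norm_num [hg, Stmt13Aux.count1]
  | 2 => norm_num [hg, Stmt13Aux.count1, Stmt13Aux.count2]
  | 3 => norm_num [hg, Stmt13Aux.count1, Stmt13Aux.count2, Stmt13Aux.count3]
  | (m + 4) =>
    have hrec := Stmt13Aux.count_rec (n := m + 4) (by omega)
    have e1 : m + 4 - 1 = m + 3 := rfl
    have e2 : m + 4 - 2 = m + 2 := rfl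
    have e3 : m + 4 - 3 = m + 1 := rfl
    rw [e1, e2, e3] at hrec ⊢
    rw [if_pos (by omega : 1 ≤ m + 4), if_pos (by omega : 2 ≤ m + 4),
      if_pos (by omega : 3 ≤ m + 4)]
    rw [if_neg (by omega : ¬ m + 4 = 1), if_neg (by omega : ¬ m + 4 = 2),
      if_neg (by omega : ¬ m + 4 = 3)]
    simp only [hg, if_neg (by omega : ¬ m + 4 = 0), if_neg (by omega : ¬ m + 3 = 0),
      if_neg (by omega : ¬ m + 2 = 0), if_neg (by omega : ¬ m + 1 = 0)]
    rw [hrec]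
    push_cast
    ring
end

section
/- There are no simple involutions of length greater than 2 avoiding both 4321 and 312; in particular, in any simple permutation of length at least 4, the value 1 is not a fixed point, and any simple involution of length ≥ 4 contains a subsequence order-isomorphic to 312 of the form M, 1, m with M > m an excedance-deficiency pair. -/
open Equiv Finset

lemma part2 (n : ℕ) (hn : 4 ≤ n) (π : Equiv.Perm (Fin n)) (hs : IsSimplePerm π)
    (h0 : π ⟨0, Nat.lt_of_lt_of_le (by decide) hn⟩ = ⟨0, Nat.lt_of_lt_of_le (by decide) hn⟩) : False := by
  have key : ∀ t : Fin n, t.val = 0 → (π t).val = 0 := by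
    intro t ht
    have : t = ⟨0, by omega⟩ := Fin.ext ht
    rw [this, h0]
  have key2 : ∀ t : Fin n, (π t).val = 0 → t.val = 0 := by
    intro t ht
    have : π t = π ⟨0, by omega⟩ := by rw [h0]; exact Fin.ext ht
    have := π.injective this
    rw [this]
  have hiv : IsIntervalImage π ⟨1, by omega⟩ ⟨n - 1, by omega⟩ := by
    intro i j k hai hib haj hjb hik hkj
    refine ⟨π.symm k, ?_, ?_, π.apply_symm_apply k⟩
    · rw [Fin.le_def]
      simp only [Fin.val_mk] at *
      have hmk : π (π.symm k) = k := π.apply_symm_apply k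
      by_contra h
      have h1 : (π (π.symm k)).val = 0 := key _ (by omega)
      rw [hmk] at h1
      rw [Fin.le_def] at hik hai
      simp only [Fin.val_mk] at hai
      have : (π i).val ≠ 0 := fun hz => by have := key2 i hz; omega
      omega
    · rw [Fin.le_def]
      simp only [Fin.val_mk]
      have := (π.symm k).isLt
      omega
  have h1 := (hs ⟨1, by omega⟩ ⟨n - 1, by omega⟩ (by rw [Fin.lt_def]; simp; omega) hiv).1
  simp at h1

lemma part3 (n : ℕ) (hn : 4 ≤ n) (π : Equiv.Perm (Fin n))
    (hinv : Function.Involutive ⇑π) (hs : IsSimplePerm π) :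
    ∃ a b : Fin n, a < π a ∧ a < b ∧ b < π a ∧ (π b).val = 0 ∧ 0 < a.val := by
  obtain ⟨z, hzv⟩ : ∃ z : Fin n, z.val = 0 := ⟨⟨0, by omega⟩, rfl⟩
  obtain ⟨b, hbdef⟩ : ∃ b : Fin n, π z = b := ⟨π z, rfl⟩
  have hπb : π b = z := by rw [← hbdef, hinv]
  have hb0 : 0 < b.val := by
    rcases Nat.eq_zero_or_pos b.val with h | h
    · exfalso
      apply part2 n hn π hs
      have hz' : (⟨0, by omega⟩ : Fin n) = z := Fin.ext hzv.symm
      rw [hz', hbdef]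
      exact Fin.ext (h.trans hzv.symm)
    · exact h
  by_cases hex : ∃ a : Fin n, 0 < a.val ∧ a < b ∧ b < π a
  · obtain ⟨a, ha0, hab, hba⟩ := hex
    exact ⟨a, b, hab.trans hba, hab, hba, by rw [hπb, hzv], ha0⟩
  push_neg at hex
  exfalso
  have hcl : ∀ j : Fin n, j.val ≤ b.val → (π j).val ≤ b.val := by
    intro j hj
    rcases eq_or_ne j z with rfl | hjz
    · rw [hbdef]
    rcases eq_or_ne j b with rfl | hjb
    · rw [hπb]; omega
    have hj0 : 0 < j.val := by
      rcases Nat.eq_zero_or_pos j.val with h | h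
      · exact absurd (Fin.ext (h.trans hzv.symm) : j = z) hjz
      · exact h
    have := hex j hj0 (Fin.lt_def.mpr (lt_of_le_of_ne hj (fun hh => hjb (Fin.ext hh))))
    exact Fin.le_def.mp this
  have hiv : IsIntervalImage π z b := by
    intro i j k _ _ _ hjb _ hkj
    refine ⟨π k, Fin.le_def.mpr (by omega), Fin.le_def.mpr ?_, hinv k⟩
    exact hcl k (le_trans (Fin.le_def.mp hkj) (hcl j (Fin.le_def.mp hjb)))
  have hbn : b.val = n - 1 := (hs z b (Fin.lt_def.mpr (by omega)) hiv).2
  have keyz : ∀ t : Fin n, (π t).val = 0 → t.val = n - 1 := by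
    intro t ht
    have : π t = z := Fin.ext (ht.trans hzv.symm)
    have : t = π z := by rw [← this, hinv]
    rw [this, hbdef, hbn]
  have keyb : ∀ t : Fin n, (π t).val = n - 1 → t.val = 0 := by
    intro t ht
    have : π t = b := Fin.ext (ht.trans hbn.symm)
    have : t = π b := by rw [← this, hinv]
    rw [this, hπb, hzv]
  have hiv' : IsIntervalImage π ⟨1, by omega⟩ ⟨n - 2, by omega⟩ := by
    intro i j k hai hib haj hjb hik hkj
    rw [Fin.le_def] at hai hib haj hjb hik hkj
    simp only [Fin.val_mk] at hai hib haj hjb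
    have bound : ∀ t : Fin n, 1 ≤ t.val → t.val ≤ n - 2 →
        1 ≤ (π t).val ∧ (π t).val ≤ n - 2 := by
      intro t h1 h2
      have hlt := (π t).isLt
      constructor
      · by_contra h
        have := keyz t (by omega)
        omega
      · by_contra h
        have := keyb t (by omega)
        omega
    have hbi := bound i hai hib
    have hbj := bound j haj hjb
    have hk1 : 1 ≤ k.val := le_trans hbi.1 hik
    have hk2 : k.val ≤ n - 2 := le_trans hkj hbj.2
    refine ⟨π k, Fin.le_def.mpr ?_, Fin.le_def.mpr ?_, hinv k⟩
    · simp only [Fin.val_mk]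
      by_contra h
      have := keyz k (by omega)
      omega
    · simp only [Fin.val_mk]
      by_contra h
      have hlt := (π k).isLt
      have := keyb k (by omega)
      omega
  have h1 := (hs ⟨1, by omega⟩ ⟨n - 2, by omega⟩ (by rw [Fin.lt_def]; simp; omega) hiv').1
  simp at h1

lemma no_simple_three (π : Equiv.Perm (Fin 3)) : ¬ IsSimplePerm π := by
  intro hs
  have hπp : π (π.symm 1) = 1 := π.apply_symm_apply 1
  by_cases hple : (π.symm 1).val ≤ 1
  · -- interval [0,1]
    have h01 : (π 0).val = 1 ∨ (π 1).val = 1 := by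
      have : π.symm 1 = 0 ∨ π.symm 1 = 1 := by
        rcases Nat.lt_or_ge (π.symm 1).val 1 with h | h
        · left; exact Fin.ext (by omega)
        · right; exact Fin.ext (by simp; omega)
      rcases this with h | h
      · left; rw [← h, hπp]; rfl
      · right; rw [← h, hπp]; rfl
    have hne : (π 0).val ≠ (π 1).val := by
      intro h
      have : (0 : Fin 3) = 1 := π.injective (Fin.ext h)
      simp at this
    have hiv : IsIntervalImage π 0 1 := by
      intro i j k _ hib _ hjb hik hkj
      have hcase : ∀ t : Fin 3, t ≤ 1 → t = 0 ∨ t = 1 := by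
        intro t h2
        rw [Fin.le_def] at h2
        rcases Nat.lt_or_ge t.val 1 with h | h
        · left; exact Fin.ext (by omega)
        · right; exact Fin.ext (by simp at h2 ⊢; omega)
      have hi : π i = π 0 ∨ π i = π 1 := by
        rcases hcase i hib with h | h
        · left; rw [h]
        · right; rw [h]
      have hj : π j = π 0 ∨ π j = π 1 := by
        rcases hcase j hjb with h | h
        · left; rw [h]
        · right; rw [h]
      rw [Fin.le_def] at hik hkj
      have hkval : k.val = (π 0).val ∨ k.val = (π 1).val := by
        have h0 := (π 0).isLt
        have h1 := (π 1).isLt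
        have hk := k.isLt
        rcases hi with hi | hi <;> rcases hj with hj | hj <;> rw [hi] at hik <;>
          rw [hj] at hkj <;> rcases h01 with h | h <;> omega
      rcases hkval with h | h
      · exact ⟨0, le_refl _, by rw [Fin.le_def]; simp, (Fin.ext h).symm⟩
      · exact ⟨1, by rw [Fin.le_def]; simp, le_refl _, (Fin.ext h).symm⟩
    have := (hs 0 1 (by rw [Fin.lt_def]; simp) hiv).2
    simp at this
  · -- position of value 1 is 2; interval [1,2]
    have hp2 : π.symm 1 = 2 := Fin.ext (by have := (π.symm 1).isLt; simp; omega)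
    have h12 : (π 2).val = 1 := by rw [← hp2, hπp]; rfl
    have hne : (π 1).val ≠ (π 2).val := by
      intro h
      have : (1 : Fin 3) = 2 := π.injective (Fin.ext h)
      simp at this
    have hiv : IsIntervalImage π 1 2 := by
      intro i j k hia hib hja hjb hik hkj
      have hcase : ∀ t : Fin 3, (1 : Fin 3) ≤ t → t = 1 ∨ t = 2 := by
        intro t h1
        rw [Fin.le_def] at h1
        have := t.isLt
        rcases Nat.lt_or_ge t.val 2 with h | h
        · left; exact Fin.ext (by simp at h1 ⊢; omega)
        · right; exact Fin.ext (by simp; omega)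
      have hi : π i = π 1 ∨ π i = π 2 := by
        rcases hcase i hia with h | h
        · left; rw [h]
        · right; rw [h]
      have hj : π j = π 1 ∨ π j = π 2 := by
        rcases hcase j hja with h | h
        · left; rw [h]
        · right; rw [h]
      rw [Fin.le_def] at hik hkj
      have hkval : k.val = (π 1).val ∨ k.val = (π 2).val := by
        have h1 := (π 1).isLt
        have h2 := (π 2).isLt
        have hk := k.isLt
        rcases hi with hi | hi <;> rcases hj with hj | hj <;> rw [hi] at hik <;>
          rw [hj] at hkj <;> omega
      rcases hkval with h | h
      · exact ⟨1, le_refl _, by rw [Fin.le_def]; simp, (Fin.ext h).symm⟩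
      · exact ⟨2, by rw [Fin.le_def]; simp, le_refl _, (Fin.ext h).symm⟩
    have := (hs 1 2 (by rw [Fin.lt_def]; simp) hiv).1
    simp at this

/-- There are no simple involutions of length `> 2` avoiding both 4321 and 312;
in particular, in a simple permutation of length `≥ 4` the value 1 is not a fixed
point, and a simple involution of length `≥ 4` contains a 312-pattern of the form
`M, 1, m` coming from an excedance-deficiency pair (positions `a < b < π a` with
value 1 at `b`, value `M = π a` at `a`, value `m = a` at `π a`). -/
theorem stmt14 :
    (∀ (n : ℕ) (π : Equiv.Perm (Fin n)), 2 < n → Function.Involutive ⇑π →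
      Avoids4321 π → Avoids312 π → ¬ IsSimplePerm π) ∧
    (∀ (n : ℕ) (hn : 4 ≤ n) (π : Equiv.Perm (Fin n)), IsSimplePerm π →
      π ⟨0, by omega⟩ ≠ ⟨0, by omega⟩) ∧
    (∀ (n : ℕ) (π : Equiv.Perm (Fin n)), 4 ≤ n → Function.Involutive ⇑π →
      IsSimplePerm π →
      ∃ a b : Fin n, a < π a ∧ a < b ∧ b < π a ∧ (π b).val = 0 ∧ 0 < a.val) := by
  refine ⟨?_, fun n hn π hs h => part2 n hn π hs h,
    fun n π hn hinv hs => part3 n hn π hinv hs⟩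
  intro n π hn hinv _ h312 hs
  rcases eq_or_lt_of_le (show 3 ≤ n by omega) with h3 | h4
  · subst h3
    exact no_simple_three π hs
  · obtain ⟨a, b, hapa, hab, hbpa, hpb0, ha0⟩ := part3 n (by omega) π hinv hs
    apply h312
    refine ⟨a, b, π a, hab, hbpa, ?_, ?_⟩
    · rw [hinv a, Fin.lt_def, hpb0]; exact ha0
    · rw [hinv a]; exact hapa
end

section
/- Let π be an irreducible (connected) involution of length n ≥ 2 avoiding 3412. Then π(1) = n and π(n) = 1, and the pattern of π restricted to positions 2,…,n−1 is an involution of length n−2 avoiding 3412; that is, π = n (π') 1 where π' is a 3412-avoiding involution of length n−2 shifted up by 1. -/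
open Equiv Finset

/-- An irreducible (connected) 3412-avoiding involution of length `n ≥ 2` has
`π(1) = n` and `π(n) = 1`, and its restriction to positions `2, …, n−1` is (after
shifting by one) a 3412-avoiding involution of length `n − 2`. -/
theorem stmt16 (n : ℕ) (hn : 2 ≤ n) (π : Equiv.Perm (Fin n))
    (hinv : Function.Involutive ⇑π) (hav : Avoids3412 π)
    (hconn : IsConnectedPerm π) :
    π ⟨0, by omega⟩ = ⟨n - 1, by omega⟩ ∧ π ⟨n - 1, by omega⟩ = ⟨0, by omega⟩ ∧
    ∃ π' : Equiv.Perm (Fin (n - 2)), Function.Involutive ⇑π' ∧ Avoids3412 π' ∧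
      ∀ i : Fin (n - 2),
        (π ⟨i.val + 1, by have := i.isLt; omega⟩).val = (π' i).val + 1 := by
  have h0n : (0:ℕ) < n := by omega
  have key : (π ⟨0, h0n⟩).val = n - 1 := by
    by_contra hne
    have ha0 : (π ⟨0, h0n⟩).val ≠ 0 := by
      intro h0
      apply hconn
      refine ⟨1, one_pos, by omega, fun i hi => ?_⟩
      have : i = ⟨0, h0n⟩ := Fin.ext (show i.val = 0 by omega)
      rw [this]; omega
    have hbound : (π ⟨0, h0n⟩).val < n - 1 := by
      have := (π ⟨0, h0n⟩).isLt; omega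
    have hpa : π (π ⟨0, h0n⟩) = ⟨0, h0n⟩ := hinv _
    have hmaps : ∀ i : Fin n, i.val ≤ (π ⟨0, h0n⟩).val →
        (π i).val ≤ (π ⟨0, h0n⟩).val := by
      intro i hi
      by_contra hgt
      push_neg at hgt
      have hi0 : i.val ≠ 0 := by
        intro h
        have : i = ⟨0, h0n⟩ := Fin.ext h
        rw [this] at hgt; omega
      have hia : i ≠ π ⟨0, h0n⟩ := by
        intro h; rw [h, hpa] at hgt; simp at hgt
      have hia' : i.val < (π ⟨0, h0n⟩).val :=
        lt_of_le_of_ne hi (fun h => hia (Fin.ext h))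
      apply hav
      refine ⟨⟨0, h0n⟩, i, π ⟨0, h0n⟩, π i, ?_, ?_, ?_, ?_, ?_, ?_⟩
      · exact Fin.lt_def.mpr (show 0 < i.val by omega)
      · exact Fin.lt_def.mpr hia'
      · exact Fin.lt_def.mpr hgt
      · rw [hpa, hinv]
        exact Fin.lt_def.mpr (show 0 < i.val by omega)
      · rw [hinv]
        exact Fin.lt_def.mpr hia'
      · exact Fin.lt_def.mpr hgt
    exact hconn ⟨(π ⟨0, h0n⟩).val + 1, by omega, by omega,
      fun i hi => by have := hmaps i (by omega); omega⟩
  have h1 : π ⟨0, by omega⟩ = (⟨n - 1, by omega⟩ : Fin n) := Fin.ext key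
  have h2 : π ⟨n - 1, by omega⟩ = (⟨0, by omega⟩ : Fin n) := by
    rw [← h1, hinv]
  refine ⟨h1, h2, ?_⟩
  have hlb : ∀ m : Fin n, 0 < m.val → m.val < n - 1 →
      1 ≤ (π m).val ∧ (π m).val ≤ n - 2 := by
    intro m hm1 hm2
    constructor
    · by_contra h
      have h0 : π m = (⟨0, by omega⟩ : Fin n) := Fin.ext (show (π m).val = 0 by omega)
      have hm : m = π ⟨0, by omega⟩ := by rw [← h0]; exact (hinv m).symm
      rw [h1] at hm
      rw [hm] at hm2; simp at hm2
    · have hlt := (π m).isLt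
      by_contra h
      have h0 : π m = (⟨n - 1, by omega⟩ : Fin n) := Fin.ext (show (π m).val = n - 1 by omega)
      have hm : m = π ⟨n - 1, by omega⟩ := by rw [← h0]; exact (hinv m).symm
      rw [h2] at hm
      rw [hm] at hm1; simp at hm1
  have hi1 : ∀ i : Fin (n - 2), i.val + 1 < n := fun i => by have := i.isLt; omega
  have hg : ∀ i : Fin (n - 2),
      1 ≤ (π ⟨i.val + 1, hi1 i⟩).val ∧ (π ⟨i.val + 1, hi1 i⟩).val ≤ n - 2 :=
    fun i => hlb ⟨i.val + 1, hi1 i⟩ (Nat.succ_pos _)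
      (show i.val + 1 < n - 1 by have := i.isLt; omega)
  let f : Fin (n - 2) → Fin (n - 2) := fun i =>
    ⟨(π ⟨i.val + 1, hi1 i⟩).val - 1, by have := (hg i).2; have := i.isLt; omega⟩
  have hfval : ∀ i : Fin (n - 2), (f i).val = (π ⟨i.val + 1, hi1 i⟩).val - 1 :=
    fun i => rfl
  have hfval' : ∀ i : Fin (n - 2), (f i).val + 1 = (π ⟨i.val + 1, hi1 i⟩).val := by
    intro i; have := (hg i).1; rw [hfval]; omega
  have hff : Function.Involutive f := by
    intro i
    apply Fin.ext
    rw [hfval]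
    have harg : (⟨(f i).val + 1, hi1 (f i)⟩ : Fin n) = π ⟨i.val + 1, hi1 i⟩ :=
      Fin.ext (hfval' i)
    rw [harg, hinv ⟨i.val + 1, hi1 i⟩]
    show i.val + 1 - 1 = i.val
    omega
  refine ⟨hff.toPerm f, hff, ?_, ?_⟩
  · rintro ⟨a, b, c, d, hab, hbc, hcd, p1, p2, p3⟩
    replace p1 : (f c).val < (f d).val := p1
    replace p2 : (f d).val < (f a).val := p2
    replace p3 : (f a).val < (f b).val := p3
    rw [hfval, hfval] at p1 p2 p3
    have hab' : a.val < b.val := hab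
    have hbc' : b.val < c.val := hbc
    have hcd' : c.val < d.val := hcd
    have ga := (hg a).1
    have gb := (hg b).1
    have gc := (hg c).1
    have gd := (hg d).1
    apply hav
    refine ⟨⟨a.val + 1, hi1 a⟩, ⟨b.val + 1, hi1 b⟩, ⟨c.val + 1, hi1 c⟩,
      ⟨d.val + 1, hi1 d⟩, ?_, ?_, ?_, ?_, ?_, ?_⟩
    · show a.val + 1 < b.val + 1; omega
    · show b.val + 1 < c.val + 1; omega
    · show c.val + 1 < d.val + 1; omega
    · show (π ⟨c.val + 1, hi1 c⟩).val < (π ⟨d.val + 1, hi1 d⟩).val; omega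
    · show (π ⟨d.val + 1, hi1 d⟩).val < (π ⟨a.val + 1, hi1 a⟩).val; omega
    · show (π ⟨a.val + 1, hi1 a⟩).val < (π ⟨b.val + 1, hi1 b⟩).val; omega
  · intro i
    show (π ⟨i.val + 1, hi1 i⟩).val = (f i).val + 1
    exact (hfval' i).symm
end

section
/- The set of involutions avoiding 3412 contains no simple permutation of length greater than 2; every 3412-avoiding involution of length ≥ 3 is either a direct sum of shorter 3412-avoiding involutions or equals 321[1, σ, 1] for some 3412-avoiding involution σ. -/
open Equiv Finset

/-- The 3412-avoiding involutions contain no simple permutation of length `> 2`: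
every 3412-avoiding involution of length `≥ 3` is not simple, and is either a
direct sum of shorter permutations or equals `321[1, σ, 1]` for some 3412-avoiding
involution `σ`. -/
theorem stmt17 (n : ℕ) (hn : 3 ≤ n) (π : Equiv.Perm (Fin n))
    (hinv : Function.Involutive ⇑π) (hav : Avoids3412 π) :
    ¬ IsSimplePerm π ∧
    ((∃ k : ℕ, 0 < k ∧ k < n ∧ ∀ i : Fin n, i.val < k → (π i).val < k) ∨
     (π ⟨0, by omega⟩ = ⟨n - 1, by omega⟩ ∧
      ∃ π' : Equiv.Perm (Fin (n - 2)), Function.Involutive ⇑π' ∧ Avoids3412 π' ∧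
        ∀ i : Fin (n - 2),
          (π ⟨i.val + 1, by have := i.isLt; omega⟩).val = (π' i).val + 1)) := by
  classical
  have h0 : (0 : ℕ) < n := by omega
  have hn1 : n - 1 < n := by omega
  have b0 : (⟨0, h0⟩ : Fin n).val = 0 := rfl
  have bn : (⟨n - 1, hn1⟩ : Fin n).val = n - 1 := rfl
  by_cases hdec : ∃ k : ℕ, 0 < k ∧ k < n ∧ ∀ i : Fin n, i.val < k → (π i).val < k
  · refine ⟨?_, Or.inl hdec⟩
    obtain ⟨k, hk0, hkn, hk⟩ := hdec
    intro hs
    by_cases hk2 : 2 ≤ k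
    · have pk : k - 1 < n := by omega
      have bk : (⟨k - 1, pk⟩ : Fin n).val = k - 1 := rfl
      have hab : (⟨0, h0⟩ : Fin n) < ⟨k - 1, pk⟩ := by
        simp only [Fin.lt_def]; omega
      have h2 := hs ⟨0, h0⟩ ⟨k - 1, pk⟩ hab ?_
      · exact absurd h2.2 (by omega)
      · intro i j kv hi1 hi2 hj1 hj2 hv1 hv2
        have hj2' : j.val ≤ k - 1 := Fin.le_def.mp hj2
        have hjk : (π j).val < k := hk j (by omega)
        have hv2' : kv.val ≤ (π j).val := Fin.le_def.mp hv2
        have hm := hk kv (by omega)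
        refine ⟨π kv, Fin.le_def.mpr (Nat.zero_le _), Fin.le_def.mpr (by omega), hinv kv⟩
    · -- k = 1
      have hk1 : k = 1 := by omega
      subst hk1
      have hπ0 : π ⟨0, h0⟩ = ⟨0, h0⟩ := by
        have := hk ⟨0, h0⟩ (by omega)
        exact Fin.ext (by omega)
      have p1 : (1 : ℕ) < n := by omega
      have b1 : (⟨1, p1⟩ : Fin n).val = 1 := rfl
      have hab : (⟨1, p1⟩ : Fin n) < ⟨n - 1, hn1⟩ := by
        simp only [Fin.lt_def]; omega
      have h2 := hs ⟨1, p1⟩ ⟨n - 1, hn1⟩ hab ?_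
      · exact absurd h2.1 (by omega)
      · intro i j kv hi1 hi2 hj1 hj2 hv1 hv2
        have hi1' : 1 ≤ i.val := Fin.le_def.mp hi1
        have hpi1 : 1 ≤ (π i).val := by
          rcases Nat.eq_zero_or_pos (π i).val with h | h
          · exfalso
            have h1 : π i = ⟨0, h0⟩ := Fin.ext h
            have h3 := congrArg Fin.val (π.injective (h1.trans hπ0.symm))
            omega
          · omega
        have hkv1 : 1 ≤ kv.val := le_trans hpi1 (Fin.le_def.mp hv1)
        refine ⟨π kv, ?_, ?_, hinv kv⟩
        · rcases Nat.eq_zero_or_pos (π kv).val with h | h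
          · exfalso
            have h1 : π kv = ⟨0, h0⟩ := Fin.ext h
            have h3 := congrArg Fin.val (π.injective (h1.trans hπ0.symm))
            omega
          · exact Fin.le_def.mpr (by omega)
        · have := (π kv).isLt
          exact Fin.le_def.mpr (by omega)
  · -- connected case
    push_neg at hdec
    have ha1 : 1 ≤ (π ⟨0, h0⟩).val := by
      obtain ⟨i, hik, hpi⟩ := hdec 1 (by omega) (by omega)
      have hi : i = ⟨0, h0⟩ := Fin.ext (by omega)
      rw [hi] at hpi; omega
    have han : (π ⟨0, h0⟩).val = n - 1 := by
      by_contra h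
      have hlt : (π ⟨0, h0⟩).val + 1 < n := by
        have := (π ⟨0, h0⟩).isLt; omega
      obtain ⟨i, hik, hpi⟩ := hdec ((π ⟨0, h0⟩).val + 1) (by omega) hlt
      have hi0 : i.val ≠ 0 := by
        intro hz
        have hi : i = ⟨0, h0⟩ := Fin.ext hz
        rw [hi] at hpi; omega
      have hia : i.val ≠ (π ⟨0, h0⟩).val := by
        intro heq
        have hi : i = π ⟨0, h0⟩ := Fin.ext heq
        rw [hi, hinv] at hpi
        omega
      apply hav
      have e1 : (π (π ⟨0, h0⟩)).val = 0 := by rw [hinv]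
      have e2 : (π (π i)).val = i.val := by rw [hinv]
      refine ⟨⟨0, h0⟩, i, π ⟨0, h0⟩, π i, ?_, ?_, ?_, ?_, ?_, ?_⟩
      all_goals simp only [Fin.lt_def]
      · omega
      · omega
      · omega
      · rw [e1, e2]; omega
      · rw [e2]; omega
      · omega
    have hπ0 : π ⟨0, h0⟩ = ⟨n - 1, hn1⟩ := Fin.ext han
    have hπn : π ⟨n - 1, hn1⟩ = ⟨0, h0⟩ := by
      have := hinv ⟨0, h0⟩
      rw [hπ0] at this
      exact this
    have hlt1 : ∀ i : Fin (n - 2), i.val + 1 < n := fun i => by have := i.isLt; omega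
    have hval : ∀ i : Fin (n - 2),
        1 ≤ (π ⟨i.val + 1, hlt1 i⟩).val ∧ (π ⟨i.val + 1, hlt1 i⟩).val ≤ n - 2 := by
      intro i
      have hilt := i.isLt
      constructor
      · rcases Nat.eq_zero_or_pos (π ⟨i.val + 1, hlt1 i⟩).val with h | h
        · exfalso
          have h1 : π ⟨i.val + 1, hlt1 i⟩ = ⟨0, h0⟩ := Fin.ext h
          have h3 := congrArg Fin.val (π.injective (h1.trans hπn.symm))
          simp only at h3
          omega
        · omega
      · by_contra h
        have h1 : π ⟨i.val + 1, hlt1 i⟩ = ⟨n - 1, hn1⟩ := by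
          have := (π ⟨i.val + 1, hlt1 i⟩).isLt
          exact Fin.ext (by omega)
        have h3 := congrArg Fin.val (π.injective (h1.trans hπ0.symm))
        simp only at h3
        omega
    have hfb : ∀ i : Fin (n - 2), (π ⟨i.val + 1, hlt1 i⟩).val - 1 < n - 2 := by
      intro i; have := hval i; omega
    let f : Fin (n - 2) → Fin (n - 2) := fun i => ⟨(π ⟨i.val + 1, hlt1 i⟩).val - 1, hfb i⟩
    have hfval : ∀ i : Fin (n - 2), (f i).val = (π ⟨i.val + 1, hlt1 i⟩).val - 1 :=
      fun i => rfl
    have hv2 : ∀ x : Fin (n - 2), (π ⟨x.val + 1, hlt1 x⟩).val = (f x).val + 1 := by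
      intro x
      have := (hval x).1
      rw [hfval]
      omega
    have hfinv : Function.Involutive f := by
      intro i
      apply Fin.ext
      rw [hfval]
      have hmk : (⟨(f i).val + 1, hlt1 (f i)⟩ : Fin n) = π ⟨i.val + 1, hlt1 i⟩ :=
        Fin.ext (hv2 i).symm
      rw [hmk, hinv]
      show i.val + 1 - 1 = i.val
      omega
    refine ⟨?_, Or.inr ⟨hπ0, Function.Involutive.toPerm f hfinv, ?_, ?_, ?_⟩⟩
    · -- not simple: interval [0, n-2]
      intro hs
      have pn2 : n - 2 < n := by omega
      have bn2 : (⟨n - 2, pn2⟩ : Fin n).val = n - 2 := rfl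
      have hab : (⟨0, h0⟩ : Fin n) < ⟨n - 2, pn2⟩ := by
        simp only [Fin.lt_def]; omega
      have h2 := hs ⟨0, h0⟩ ⟨n - 2, pn2⟩ hab ?_
      · exact absurd h2.2 (by omega)
      · intro i j kv hi1 hi2 hj1 hj2 hu1 hu2
        have hi2' : i.val ≤ n - 2 := Fin.le_def.mp hi2
        have hpi1 : 1 ≤ (π i).val := by
          rcases Nat.eq_zero_or_pos (π i).val with h | h
          · exfalso
            have h1 : π i = ⟨0, h0⟩ := Fin.ext h
            have h3 := congrArg Fin.val (π.injective (h1.trans hπn.symm))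
            simp only at h3
            omega
          · omega
        have hkv1 : 1 ≤ kv.val := le_trans hpi1 (Fin.le_def.mp hu1)
        refine ⟨π kv, Fin.le_def.mpr (Nat.zero_le _), ?_, hinv kv⟩
        rcases Nat.lt_or_ge (π kv).val (n - 1) with h | h
        · exact Fin.le_def.mpr (by omega)
        · exfalso
          have h1 : π kv = ⟨n - 1, hn1⟩ := by
            have := (π kv).isLt
            exact Fin.ext (by omega)
          have h3 := congrArg Fin.val (π.injective (h1.trans hπ0.symm))
          simp only at h3
          omega
    · rw [Function.Involutive.coe_toPerm]
      exact hfinv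
    · intro ⟨a, b, c, d, h1, h2, h3, h4, h5, h6⟩
      rw [Function.Involutive.coe_toPerm] at h4 h5 h6
      have n1 := Fin.lt_def.mp h1
      have n2 := Fin.lt_def.mp h2
      have n3 := Fin.lt_def.mp h3
      have v4 := Fin.lt_def.mp h4
      have v5 := Fin.lt_def.mp h5
      have v6 := Fin.lt_def.mp h6
      apply hav
      refine ⟨⟨a.val + 1, hlt1 a⟩, ⟨b.val + 1, hlt1 b⟩, ⟨c.val + 1, hlt1 c⟩,
        ⟨d.val + 1, hlt1 d⟩, Fin.mk_lt_mk.mpr (by omega), Fin.mk_lt_mk.mpr (by omega),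
        Fin.mk_lt_mk.mpr (by omega), ?_, ?_, ?_⟩
      · exact Fin.lt_def.mpr (by rw [hv2 c, hv2 d]; omega)
      · exact Fin.lt_def.mpr (by rw [hv2 d, hv2 a]; omega)
      · exact Fin.lt_def.mpr (by rw [hv2 a, hv2 b]; omega)
    · intro i
      show (π ⟨i.val + 1, hlt1 i⟩).val = ((Function.Involutive.toPerm f hfinv) i).val + 1
      rw [hv2 i]
      rfl
end
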